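/- arXiv:2409.12770 — 12 statements merged into one kernel-verified Lean document; each statement's English description precedes it below -/
import Mathlib

section
/- For all simple graphs H₁ and H₂, the Ramsey number satisfies R(H₁, K₁ + H₂) ≤ R(H₁, K_{1, R(H₁, H₂)}), where K₁ + H₂ is the graph obtained from H₂ by adding one new vertex joined to every vertex of H₂. -/
/-- `G` contains a subgraph isomorphic to `H`, i.e. there is an injective map of the
vertices of `H` into the vertices of `G` preserving adjacency. -/
def SimpleGraph.ContainsCopy {V W : Type*} (G : SimpleGraph V) (H : SimpleGraph W) : Prop :=
  ∃ f : W ↪ V, ∀ ⦃a b : W⦄, H.Adj a b → G.Adj (f a) (f b)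

/-- The Ramsey number `R(H₁, H₂)`: the least `N` such that every simple graph `G` on `N`
vertices contains a subgraph isomorphic to `H₁`, or its complement contains a subgraph
isomorphic to `H₂`. -/
noncomputable def ramseyNumber {V W : Type*} (H₁ : SimpleGraph V) (H₂ : SimpleGraph W) : ℕ :=
  sInf {N : ℕ | ∀ G : SimpleGraph (Fin N),
    G.ContainsCopy H₁ ∨ Gᶜ.ContainsCopy H₂}

/-- The star `K_{1,n}` on `n + 1` vertices. -/
def starGraph (n : ℕ) : SimpleGraph (Fin 1 ⊕ Fin n) := completeBipartiteGraph (Fin 1) (Fin n)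
/-- The join `K₁ + H`: the graph obtained from `H` by adding one new vertex joined to
every vertex of `H`. -/
def joinOne {W : Type*} (H : SimpleGraph W) : SimpleGraph (Option W) :=
  SimpleGraph.fromRel (fun x y => x = none ∨ ∃ a b, x = some a ∧ y = some b ∧ H.Adj a b)


section
open SimpleGraph

lemma containsCopy_of_comap {X Y : Type*} (K : SimpleGraph X) (e : Y ↪ X) {W : Type*}
    (H : SimpleGraph W) (h : (K.comap e).ContainsCopy H) : K.ContainsCopy H := by
  obtain ⟨f, hf⟩ := h
  exact ⟨f.trans e, fun a b hab => hf hab⟩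

lemma comap_compl_emb {X Y : Type*} (K : SimpleGraph X) (e : Y ↪ X) :
    Kᶜ.comap e = (K.comap e)ᶜ := by
  ext a b
  simp only [comap_adj, compl_adj, ne_eq, EmbeddingLike.apply_eq_iff_eq]

lemma exists_emb_of_card_le {X : Type*} [DecidableEq X] (s : Finset X) {m : ℕ}
    (h : m ≤ s.card) : ∃ e : Fin m ↪ X, ∀ i, e i ∈ s := by
  refine ⟨⟨fun i => (s.equivFin.symm (Fin.castLE h i) : X), ?_⟩, fun i => (s.equivFin.symm _).2⟩
  intro i j hij
  have := s.equivFin.symm.injective (Subtype.ext hij)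
  exact Fin.ext (congrArg Fin.val this :)

/-- Extend a copy of `H` minus vertex `v` inside the common neighbourhood of `x`
to a copy of `H`, by sending `v` to `x`. -/
lemma step_copy {V : Type*} (H : SimpleGraph V) (v : V) {X : Type*} (K : SimpleGraph X)
    (x : X) {m : ℕ} (e : Fin m ↪ X) (he : ∀ i, K.Adj x (e i))
    (h : (K.comap e).ContainsCopy (H.comap (Function.Embedding.subtype (fun u => u ≠ v)))) :
    K.ContainsCopy H := by
  classical
  obtain ⟨f, hf⟩ := h
  have hxe : ∀ i : Fin m, x ≠ e i := fun i => (he i).ne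
  refine ⟨⟨fun u => if hu : u = v then x else e (f ⟨u, hu⟩), ?_⟩, ?_⟩
  · intro u₁ u₂ h12
    simp only [Function.Embedding.coeFn_mk] at h12
    by_cases h1 : u₁ = v <;> by_cases h2 : u₂ = v
    · exact h1.trans h2.symm
    · rw [dif_pos h1, dif_neg h2] at h12; exact absurd h12 (hxe _)
    · rw [dif_neg h1, dif_pos h2] at h12; exact absurd h12.symm (hxe _)
    · rw [dif_neg h1, dif_neg h2] at h12
      exact Subtype.mk_eq_mk.mp (f.injective (e.injective h12))
  · intro a b hab
    show K.Adj (if ha : a = v then x else e (f ⟨a, ha⟩)) (if hb : b = v then x else e (f ⟨b, hb⟩))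
    by_cases h1 : a = v <;> by_cases h2 : b = v
    · exact absurd (h1.trans h2.symm) hab.ne
    · rw [dif_pos h1, dif_neg h2]; exact he _
    · rw [dif_neg h1, dif_pos h2]; exact (he _).symm
    · rw [dif_neg h1, dif_neg h2]
      exact hf (show (H.comap (Function.Embedding.subtype fun u => u ≠ v)).Adj ⟨a, h1⟩ ⟨b, h2⟩ from hab)

theorem ramsey_exists' : ∀ (n : ℕ) (V W : Type) [Fintype V] [Fintype W]
    (H₁ : SimpleGraph V) (H₂ : SimpleGraph W), Fintype.card V + Fintype.card W ≤ n →
    ∃ N, ∀ G : SimpleGraph (Fin N), G.ContainsCopy H₁ ∨ Gᶜ.ContainsCopy H₂ := by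
  intro n
  induction n with
  | zero =>
    intro V W _ _ H₁ H₂ h
    have : IsEmpty V := Fintype.card_eq_zero_iff.mp (by omega)
    exact ⟨0, fun G => Or.inl ⟨Function.Embedding.ofIsEmpty, fun a => isEmptyElim a⟩⟩
  | succ n ih =>
    intro V W _ _ H₁ H₂ hcard
    classical
    rcases isEmpty_or_nonempty V with hV | hV
    · exact ⟨0, fun G => Or.inl ⟨Function.Embedding.ofIsEmpty, fun a => isEmptyElim a⟩⟩
    rcases isEmpty_or_nonempty W with hW | hW
    · exact ⟨0, fun G => Or.inr ⟨Function.Embedding.ofIsEmpty, fun a => isEmptyElim a⟩⟩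
    obtain ⟨v⟩ := hV
    obtain ⟨w⟩ := hW
    have hv : Fintype.card {u : V // u ≠ v} < Fintype.card V :=
      Fintype.card_subtype_lt (x := v) (by simp)
    have hw : Fintype.card {u : W // u ≠ w} < Fintype.card W :=
      Fintype.card_subtype_lt (x := w) (by simp)
    obtain ⟨N₁, hN₁⟩ := ih {u : V // u ≠ v} W
      (H₁.comap (Function.Embedding.subtype (fun u => u ≠ v))) H₂ (by omega)
    obtain ⟨N₂, hN₂⟩ := ih V {u : W // u ≠ w}
      H₁ (H₂.comap (Function.Embedding.subtype (fun u => u ≠ w))) (by omega)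
    refine ⟨N₁ + N₂ + 1, fun G => ?_⟩
    have hx0 : 0 < N₁ + N₂ + 1 := by omega
    set x : Fin (N₁ + N₂ + 1) := ⟨0, hx0⟩ with hxdef
    have hdegc : Gᶜ.degree x = Fintype.card (Fin (N₁ + N₂ + 1)) - 1 - G.degree x :=
      SimpleGraph.degree_compl G x
    have hdlt : G.degree x < Fintype.card (Fin (N₁ + N₂ + 1)) := G.degree_lt_card_verts x
    rw [Fintype.card_fin] at hdegc hdlt
    rcases le_or_gt N₁ (G.degree x) with h | h
    · obtain ⟨e, he⟩ := exists_emb_of_card_le (G.neighborFinset x) h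
      have he' : ∀ i, G.Adj x (e i) := fun i => (SimpleGraph.mem_neighborFinset _ _ _).mp (he i)
      rcases hN₁ (G.comap e) with hc | hc
      · exact Or.inl (step_copy H₁ v G x e he' hc)
      · refine Or.inr (containsCopy_of_comap Gᶜ e H₂ ?_)
        rwa [comap_compl_emb]
    · have h2 : N₂ ≤ Gᶜ.degree x := by omega
      obtain ⟨e, he⟩ := exists_emb_of_card_le (Gᶜ.neighborFinset x) h2
      have he' : ∀ i, Gᶜ.Adj x (e i) := fun i => (SimpleGraph.mem_neighborFinset _ _ _).mp (he i)
      rcases hN₂ (G.comap e) with hc | hc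
      · exact Or.inl (containsCopy_of_comap G e H₁ hc)
      · refine Or.inr (step_copy H₂ w Gᶜ x e he' ?_)
        rwa [← comap_compl_emb] at hc

end

/-- For all simple graphs `H₁`, `H₂`:  `R(H₁, K₁ + H₂) ≤ R(H₁, K_{1, R(H₁, H₂)})`. -/
theorem ramsey_join_le_ramsey_star {V W : Type} [Fintype V] [Fintype W]
    (H₁ : SimpleGraph V) (H₂ : SimpleGraph W) :
    ramseyNumber H₁ (joinOne H₂) ≤ ramseyNumber H₁ (starGraph (ramseyNumber H₁ H₂)) := by
  classical
  set r := ramseyNumber H₁ H₂ with hrdef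
  have hC : {N : ℕ | ∀ G : SimpleGraph (Fin N),
      G.ContainsCopy H₁ ∨ Gᶜ.ContainsCopy H₂}.Nonempty := by
    obtain ⟨N, hN⟩ := ramsey_exists' (Fintype.card V + Fintype.card W) V W H₁ H₂ le_rfl
    exact ⟨N, hN⟩
  have hr : ∀ G : SimpleGraph (Fin r), G.ContainsCopy H₁ ∨ Gᶜ.ContainsCopy H₂ :=
    Nat.sInf_mem hC
  have hB : {N : ℕ | ∀ G : SimpleGraph (Fin N),
      G.ContainsCopy H₁ ∨ Gᶜ.ContainsCopy (starGraph r)}.Nonempty := by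
    obtain ⟨N, hN⟩ := ramsey_exists' (Fintype.card V + Fintype.card (Fin 1 ⊕ Fin r))
      V (Fin 1 ⊕ Fin r) H₁ (starGraph r) le_rfl
    exact ⟨N, hN⟩
  have hN : ∀ G : SimpleGraph (Fin (ramseyNumber H₁ (starGraph r))),
      G.ContainsCopy H₁ ∨ Gᶜ.ContainsCopy (starGraph r) := Nat.sInf_mem hB
  apply Nat.sInf_le
  intro G
  rcases hN G with h | h
  · exact Or.inl h
  obtain ⟨f, hf⟩ := h
  set c : Fin (ramseyNumber H₁ (starGraph r)) := f (Sum.inl 0) with hcdef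
  set g : Fin r ↪ Fin (ramseyNumber H₁ (starGraph r)) :=
    (Function.Embedding.inr).trans f with hgdef
  have hadj : ∀ i : Fin r, Gᶜ.Adj c (g i) := by
    intro i
    exact hf (by simp [starGraph])
  rcases hr (G.comap g) with h' | h'
  · exact Or.inl (containsCopy_of_comap G g H₁ h')
  obtain ⟨h, hh⟩ := h'
  right
  refine ⟨⟨fun o => o.elim c (fun a => g (h a)), ?_⟩, ?_⟩
  · intro o₁ o₂ h12
    cases o₁ <;> cases o₂ <;> simp only [Option.elim] at h12
    · rfl
    · exact absurd h12 (hadj _).ne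
    · exact absurd h12.symm (hadj _).ne
    · exact congrArg _ (h.injective (g.injective h12))
  · intro a b hab
    have key : ∀ p q : W, H₂.Adj p q → Gᶜ.Adj (g (h p)) (g (h q)) := by
      intro p q hpq
      obtain ⟨hne, hna⟩ := hh hpq
      exact ⟨g.injective.ne hne, hna⟩
    obtain ⟨hne, hrel⟩ := hab
    show Gᶜ.Adj (a.elim c (fun a => g (h a))) (b.elim c (fun a => g (h a)))
    rcases hrel with h1 | h1
    · rcases h1 with h1 | ⟨p, q, hp, hq, hpq⟩
      · subst h1
        cases b with
        | none => exact absurd rfl hne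
        | some b => exact hadj (h b)
      · subst hp; subst hq
        exact key p q hpq
    · rcases h1 with h1 | ⟨p, q, hp, hq, hpq⟩
      · subst h1
        cases a with
        | none => exact absurd rfl hne
        | some a => exact (hadj (h a)).symm
      · subst hp; subst hq
        exact (key p q hpq).symm
end

section
/- If n is an even natural number (n ≥ 2) such that ⌈√n⌉ is odd, then R(C₄, K_{1,n}) ≤ n + ⌈√(n − ⌈√n⌉ + 2)⌉ + 1. -/
open Finset
open SimpleGraph hiding starGraph

/-- A graph with a vertex of degree at least `n` contains a copy of the star `K_{1,n}`. -/
lemma aux_star {N n : ℕ} (H : SimpleGraph (Fin N)) [DecidableRel H.Adj] (v : Fin N)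
    (h : n ≤ H.degree v) : H.ContainsCopy (starGraph n) := by
  obtain ⟨t, hts, htc⟩ := Finset.exists_subset_card_eq (n := n) (s := H.neighborFinset v) h
  let e := (t.equivFinOfCardEq htc).symm
  have hmem : ∀ i : Fin n, H.Adj v ((e i : Fin N)) := by
    intro i
    have := hts (e i).2
    rwa [mem_neighborFinset] at this
  refine ⟨⟨Sum.elim (fun _ => v) (fun i => (e i : Fin N)), ?_⟩, ?_⟩
  · intro a b hab
    match a, b with
    | Sum.inl x, Sum.inl y => rw [Subsingleton.elim x y]
    | Sum.inl x, Sum.inr j =>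
      exact absurd hab (hmem j).ne
    | Sum.inr i, Sum.inl y =>
      exact absurd hab.symm (hmem i).ne
    | Sum.inr i, Sum.inr j =>
      have : e i = e j := Subtype.coe_injective hab
      rw [e.injective this]
  · intro a b hab
    match a, b with
    | Sum.inl x, Sum.inl y => simp [starGraph] at hab
    | Sum.inr i, Sum.inr j => simp [starGraph] at hab
    | Sum.inl x, Sum.inr j => exact hmem j
    | Sum.inr i, Sum.inl y => exact (hmem i).symm

/-- In a `C₄`-free graph, two distinct vertices have at most one common neighbor. -/
lemma aux_common {N : ℕ} (G : SimpleGraph (Fin N)) [DecidableRel G.Adj]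
    (hC : ¬ G.ContainsCopy (SimpleGraph.cycleGraph 4)) {v w : Fin N} (hvw : v ≠ w) :
    (G.neighborFinset v ∩ G.neighborFinset w).card ≤ 1 := by
  by_contra hlt
  rw [not_le] at hlt
  obtain ⟨a, ha, b, hb, hab⟩ := Finset.one_lt_card.mp hlt
  simp only [mem_inter, mem_neighborFinset] at ha hb
  obtain ⟨hva, hwa⟩ := ha
  obtain ⟨hvb, hwb⟩ := hb
  apply hC
  have h1 : v ≠ a := hva.ne
  have h2 : w ≠ a := hwa.ne
  have h3 : v ≠ b := hvb.ne
  have h4 : w ≠ b := hwb.ne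
  refine ⟨⟨![v, a, w, b], ?_⟩, ?_⟩
  · intro i j hij
    fin_cases i <;> fin_cases j <;>
      simp_all [Matrix.cons_val_zero, Matrix.cons_val_one, Matrix.head_cons]
  · intro i j hij
    fin_cases i <;> fin_cases j <;>
      simp only [Matrix.cons_val_zero, Matrix.cons_val_one, Matrix.head_cons,
        Matrix.cons_val_two, Matrix.tail_cons, Matrix.cons_val_three] <;>
      first
        | (exfalso; revert hij; decide)
        | exact hva
        | exact hva.symm
        | exact hwa.symm
        | exact hwa
        | exact hwb
        | exact hwb.symm
        | exact hvb.symm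
        | exact hvb

/-- The key counting bound in a `C₄`-free graph:
the sum of the degrees over a neighborhood is at most `N - 1 + deg v`. -/
lemma aux_count {N : ℕ} (G : SimpleGraph (Fin N)) [DecidableRel G.Adj]
    (hC : ¬ G.ContainsCopy (SimpleGraph.cycleGraph 4)) (v : Fin N) :
    ∑ u ∈ G.neighborFinset v, G.degree u ≤ (N - 1) + G.degree v := by
  have hdeg : ∀ u : Fin N, G.degree u = ∑ w : Fin N, if G.Adj u w then 1 else 0 := by
    intro u
    rw [degree, neighborFinset_eq_filter, Finset.card_filter]
  have hfil : ∀ w : Fin N,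
      (G.neighborFinset v ∩ G.neighborFinset w)
        = (G.neighborFinset v).filter (fun u => G.Adj u w) := by
    intro w
    ext u
    simp only [mem_inter, mem_neighborFinset, mem_filter]
    exact and_congr_right fun _ => G.adj_comm w u
  calc ∑ u ∈ G.neighborFinset v, G.degree u
      = ∑ u ∈ G.neighborFinset v, ∑ w : Fin N, if G.Adj u w then 1 else 0 := by
        exact Finset.sum_congr rfl fun u _ => hdeg u
    _ = ∑ w : Fin N, ∑ u ∈ G.neighborFinset v, if G.Adj u w then 1 else 0 :=
        Finset.sum_comm
    _ = ∑ w : Fin N, (G.neighborFinset v ∩ G.neighborFinset w).card := by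
        refine Finset.sum_congr rfl fun w _ => ?_
        rw [hfil w, Finset.card_filter]
    _ = (∑ w ∈ Finset.univ \ {v}, (G.neighborFinset v ∩ G.neighborFinset w).card)
          + (G.neighborFinset v ∩ G.neighborFinset v).card :=
        (Finset.sum_eq_sum_sdiff_singleton_add (Finset.mem_univ v) _)
    _ ≤ (N - 1) + G.degree v := by
        gcongr
        · calc ∑ w ∈ Finset.univ \ {v}, (G.neighborFinset v ∩ G.neighborFinset w).card
              ≤ (Finset.univ \ {v}).card * 1 := by
                apply Finset.sum_le_card_nsmul
                intro w hw
                simp only [Finset.mem_sdiff, Finset.mem_univ, Finset.mem_singleton] at hw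
                exact aux_common G hC (Ne.symm hw.2)
            _ = N - 1 := by
                rw [mul_one, Finset.sdiff_singleton_eq_erase,
                  Finset.card_erase_of_mem (Finset.mem_univ v)]
                simp
        · rw [Finset.inter_self]
          exact le_rfl

/-- If `n ≥ 2` is even and `⌈√n⌉` is odd, then
`R(C₄, K_{1,n}) ≤ n + ⌈√(n − ⌈√n⌉ + 2)⌉ + 1`. -/
theorem ramsey_C4_star_le_of_even (n : ℕ) (hn : 2 ≤ n) (hne : Even n)
    (hodd : Odd ⌈Real.sqrt (n : ℝ)⌉₊) :
    ramseyNumber (SimpleGraph.cycleGraph 4) (starGraph n)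
      ≤ n + ⌈Real.sqrt ((n : ℝ) - (⌈Real.sqrt (n : ℝ)⌉₊ : ℝ) + 2)⌉₊ + 1 := by
  classical
  set q : ℕ := ⌈Real.sqrt (n : ℝ)⌉₊ with hqdef
  set s : ℕ := ⌈Real.sqrt ((n : ℝ) - (q : ℝ) + 2)⌉₊ with hsdef
  -- basic arithmetic facts about q and s
  have hq2 : 2 ≤ q := by
    have : (1 : ℕ) < q := by
      rw [hqdef]
      refine Nat.lt_ceil.mpr ?_
      rw [Nat.cast_one]
      rw [show (1 : ℝ) = Real.sqrt 1 by simp]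
      apply Real.sqrt_lt_sqrt (by norm_num)
      exact_mod_cast by omega
    omega
  have hq3 : 3 ≤ q := by
    obtain ⟨k, hk⟩ := hodd
    omega
  have hlowR : ((q : ℝ) - 1) ^ 2 < n := by
    have h1 : ((q - 1 : ℕ) : ℝ) < Real.sqrt n := Nat.lt_ceil.mp (by omega)
    have h2 : ((q - 1 : ℕ) : ℝ) ^ 2 < n := (Real.lt_sqrt (by positivity)).mp h1
    have h3 : ((q - 1 : ℕ) : ℝ) = (q : ℝ) - 1 := by
      push_cast [Nat.cast_sub (by omega : 1 ≤ q)]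
      ring
    rwa [h3] at h2
  have hupR : (n : ℝ) ≤ (q : ℝ) ^ 2 := by
    have h1 : Real.sqrt n ≤ q := Nat.le_ceil _
    have := Real.sqrt_le_iff.mp h1
    exact this.2
  have hup : n ≤ q * q := by
    have := hupR
    rw [sq] at this
    exact_mod_cast this
  have hq2R : (2 : ℝ) ≤ (q : ℝ) := by exact_mod_cast hq2
  have hq3R : (3 : ℝ) ≤ (q : ℝ) := by exact_mod_cast hq3
  have hnq : q ≤ n := by
    have h1 : ((q : ℝ)) ≤ ((q : ℝ) - 1) ^ 2 := by nlinarith [sq_nonneg ((q:ℝ) - 3), hq3R]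
    have : (q : ℝ) < n := lt_of_le_of_lt h1 hlowR
    exact_mod_cast this.le
  have hsq : s ≤ q := by
    rw [hsdef, Nat.ceil_le]
    rw [Real.sqrt_le_iff]
    constructor
    · positivity
    · nlinarith [hupR, hq2R]
  have hsl : q - 2 < s := by
    rw [hsdef]
    refine Nat.lt_ceil.mpr ?_
    rw [Real.lt_sqrt (by positivity)]
    have h3 : ((q - 2 : ℕ) : ℝ) = (q : ℝ) - 2 := by
      push_cast [Nat.cast_sub (by omega : 2 ≤ q)]
      ring
    rw [h3]
    nlinarith [hlowR, hq3R]
  -- membership in the Ramsey set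
  apply Nat.sInf_le
  intro G
  by_contra hcon
  push_neg at hcon
  obtain ⟨hC4, hstar⟩ := hcon
  -- minimum degree bound
  have hdeg : ∀ v : Fin (n + s + 1), s + 1 ≤ G.degree v := by
    intro v
    by_contra hd
    push_neg at hd
    have hcd : Gᶜ.degree v = Fintype.card (Fin (n + s + 1)) - 1 - G.degree v :=
      degree_compl G v
    rw [Fintype.card_fin] at hcd
    have hnle : n ≤ Gᶜ.degree v := by omega
    exact hstar (aux_star Gᶜ v hnle)
  -- the key degree-sum inequality
  have hkey : ∀ v : Fin (n + s + 1), G.degree v * s ≤ n + s := by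
    intro v
    have h1 : G.degree v * (s + 1) ≤ ∑ u ∈ G.neighborFinset v, G.degree u := by
      have := Finset.card_nsmul_le_sum (G.neighborFinset v) (fun u => G.degree u) (s + 1)
        (fun u _ => hdeg u)
      rw [smul_eq_mul] at this
      have e : #(G.neighborFinset v) = G.degree v := rfl
      rw [e] at this
      exact this
    have h2 := aux_count G hC4 v
    have h3 : G.degree v * (s + 1) ≤ (n + s) + G.degree v := by
      have := h1.trans h2
      simpa using this
    rw [Nat.mul_succ] at h3
    omega
  -- s = q - 1 or s = q
  have hcase : s = q - 1 ∨ s = q := by omega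
  rcases hcase with hc1 | hc2
  · -- s = q - 1 (s even); parity gives a vertex of degree ≥ s + 2
    have hsev : Even s := by
      obtain ⟨k, hk⟩ := hodd
      exact ⟨k, by omega⟩
    have hex : ∃ v : Fin (n + s + 1), s + 2 ≤ G.degree v := by
      by_contra hno
      push_neg at hno
      have hall : ∀ v : Fin (n + s + 1), G.degree v = s + 1 := fun v =>
        le_antisymm (by have := hno v; omega) (hdeg v)
      have hsum : ∑ v : Fin (n + s + 1), G.degree v = (n + s + 1) * (s + 1) := by
        rw [Finset.sum_congr rfl (fun v _ => hall v), Finset.sum_const,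
          Finset.card_univ, Fintype.card_fin, smul_eq_mul]
      have heven : Even (∑ v : Fin (n + s + 1), G.degree v) := by
        rw [G.sum_degrees_eq_twice_card_edges]
        exact even_two_mul _
      rw [hsum, Nat.even_mul] at heven
      obtain ⟨k, hk⟩ := hne
      obtain ⟨m, hm⟩ := hsev
      rcases heven with h | h <;> (obtain ⟨j, hj⟩ := h; omega)
    obtain ⟨v, hv⟩ := hex
    have h1 : (s + 2) * s ≤ n + s :=
      le_trans (Nat.mul_le_mul_right s hv) (hkey v)
    have h2 : n - q + 2 ≤ s * s := by
      have ha : Real.sqrt ((n : ℝ) - (q : ℝ) + 2) ≤ (s : ℝ) := by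
        rw [hsdef]; exact Nat.le_ceil _
      have hb := (Real.sqrt_le_iff.mp ha).2
      have hc : ((n - q + 2 : ℕ) : ℝ) ≤ ((s * s : ℕ) : ℝ) := by
        push_cast [Nat.cast_sub hnq]
        nlinarith [hb]
      exact_mod_cast hc
    have e1 : (s + 2) * s = s * s + 2 * s := by ring
    rw [e1] at h1
    generalize s * s = A at h1 h2
    omega
  · -- s = q : s odd, and n < q * q since n is even and q * q is odd
    have hodd' : Odd (q * q) := hodd.mul hodd
    have hlt : n < q * q := by
      rcases lt_or_eq_of_le hup with h | h
      · exact h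
      · exfalso
        obtain ⟨k, hk⟩ := hne
        obtain ⟨m, hm⟩ := hodd'
        rw [← h] at hm
        omega
    have hN : 0 < n + s + 1 := by omega
    let v : Fin (n + s + 1) := ⟨0, hN⟩
    have h1 : (s + 1) * s ≤ n + s :=
      le_trans (Nat.mul_le_mul_right s (hdeg v)) (hkey v)
    have e1 : (s + 1) * s = s * s + s := by ring
    rw [e1] at h1
    rw [hc2] at h1
    generalize q * q = A at h1 hlt
    omega
end

section
/- For all integers a ≥ 2 and b with 1 ≤ b ≤ a − 1, setting c = 4a² + 2b one has R(C₄, K_{1,c}) ≤ c + ⌈√c⌉ (indeed ⌈√c⌉ = 2a + 1 for such c). -/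
open Finset in
lemma c4_of_four {V : Type*} (G : SimpleGraph V) (v u1 w u2 : V)
    (h01 : G.Adj v u1) (h12 : G.Adj u1 w) (h23 : G.Adj w u2) (h30 : G.Adj u2 v)
    (hvw : v ≠ w) (hu : u1 ≠ u2) : G.ContainsCopy (SimpleGraph.cycleGraph 4) := by
  have hne : ∀ {x y : V}, G.Adj x y → x ≠ y := fun h => G.ne_of_adj h
  refine ⟨⟨![v, u1, w, u2], ?_⟩, ?_⟩
  · intro i j hij
    fin_cases i <;> fin_cases j <;> simp_all <;>
      first
        | rfl
        | exact absurd hij (hne h01)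
        | exact absurd hij (hne h01).symm
        | exact absurd hij (hne h12)
        | exact absurd hij (hne h12).symm
        | exact absurd hij (hne h23)
        | exact absurd hij (hne h23).symm
        | exact absurd hij (hne h30)
        | exact absurd hij (hne h30).symm
        | exact absurd hij hvw
        | exact absurd hij hvw.symm
        | exact absurd hij hu
        | exact absurd hij hu.symm
  · intro i j hij
    fin_cases i <;> fin_cases j <;>
      first
        | exact absurd hij (by decide)
        | exact h01
        | exact h01.symm
        | exact h12
        | exact h12.symm
        | exact h23
        | exact h23.symm
        | exact h30
        | exact h30.symm

open SimpleGraph hiding starGraph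
open Finset

lemma star_of_big_nbhd {V : Type*} [LinearOrder V] (H : SimpleGraph V) (v : V) (s : Finset V)
    (hv : v ∉ s) (hadj : ∀ u ∈ s, H.Adj v u) {c : ℕ} (hc : c ≤ s.card) :
    H.ContainsCopy (starGraph c) := by
  obtain ⟨t, hts, htc⟩ := Finset.exists_subset_card_eq hc
  let e := t.orderIsoOfFin htc
  refine ⟨⟨Sum.elim (fun _ => v) (fun i => (e i : V)), ?_⟩, ?_⟩
  · intro x y hxy
    rcases x with x | x <;> rcases y with y | y
    · simp [Subsingleton.elim x y]
    · simp only [Sum.elim_inl, Sum.elim_inr] at hxy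
      exact absurd (hxy ▸ (e y).2) (fun h => hv (hts h))
    · simp only [Sum.elim_inl, Sum.elim_inr] at hxy
      exact absurd (hxy.symm ▸ (e x).2) (fun h => hv (hts h))
    · simp only [Sum.elim_inr] at hxy
      exact congrArg Sum.inr (e.injective (Subtype.coe_injective hxy))
  · intro x y hxy
    rcases x with x | x <;> rcases y with y | y <;>
      simp only [starGraph, completeBipartiteGraph] at hxy <;> simp_all
    · exact hadj _ (hts (e y).2)
    · exact (hadj _ (hts (e x).2)).symm

lemma local_count {N : ℕ} (G : SimpleGraph (Fin N)) [DecidableRel G.Adj]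
    (hC4 : ¬ G.ContainsCopy (SimpleGraph.cycleGraph 4)) (v : Fin N) (δ : ℕ)
    (hδ : ∀ u, δ ≤ G.degree u) (hδ2 : 2 ≤ δ) :
    1 + G.degree v * (δ - 1) ≤ N := by
  classical
  set A := G.neighborFinset v with hA
  have hvA : v ∉ A := by simp [hA]
  set B : Finset (Fin N) := insert v A with hB
  set T : Fin N → Finset (Fin N) := fun u => G.neighborFinset u \ B with hT
  have memA : ∀ {u}, u ∈ A → G.Adj v u := by intro u hu; simpa [hA] using hu
  -- at most one neighbor of u inside A
  have h1 : ∀ u ∈ A, (G.neighborFinset u ∩ A).card ≤ 1 := by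
    intro u hu
    rw [Finset.card_le_one]
    intro x hx y hy
    by_contra hxy
    simp only [Finset.mem_inter, SimpleGraph.mem_neighborFinset] at hx hy
    exact hC4 (c4_of_four G v x u y (memA hx.2) hx.1.symm hy.1 (memA hy.2).symm
      (G.ne_of_adj (memA hu)) hxy)
  have h2 : ∀ u ∈ A, δ - 2 ≤ (T u).card := by
    intro u hu
    have hsplit : (G.neighborFinset u ∩ B).card + (T u).card = G.degree u := by
      rw [hT, SimpleGraph.degree]
      exact Finset.card_inter_add_card_sdiff (G.neighborFinset u) B
    have hsub : G.neighborFinset u ∩ B ⊆ insert v (G.neighborFinset u ∩ A) := by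
      intro x hx
      simp only [hB, Finset.mem_inter, Finset.mem_insert] at hx ⊢
      tauto
    have hcard2 : (G.neighborFinset u ∩ B).card ≤ 2 := by
      calc (G.neighborFinset u ∩ B).card ≤ (insert v (G.neighborFinset u ∩ A)).card :=
            Finset.card_le_card hsub
        _ ≤ (G.neighborFinset u ∩ A).card + 1 := Finset.card_insert_le _ _
        _ ≤ 2 := by have := h1 u hu; omega
    have := hδ u
    omega
  have h3 : ∀ u1 ∈ A, ∀ u2 ∈ A, u1 ≠ u2 → Disjoint (T u1) (T u2) := by
    intro u1 h1' u2 h2' hne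
    rw [Finset.disjoint_left]
    intro w hw1 hw2
    simp only [hT, Finset.mem_sdiff, SimpleGraph.mem_neighborFinset] at hw1 hw2
    have hwv : v ≠ w := by
      intro h; exact hw1.2 (by simp [hB, ← h])
    exact hC4 (c4_of_four G v u1 w u2 (memA h1') hw1.1 hw2.1.symm (memA h2').symm hwv hne)
  have hdisjB : Disjoint B (A.biUnion T) := by
    rw [Finset.disjoint_right]
    intro w hw
    simp only [Finset.mem_biUnion] at hw
    obtain ⟨u, -, hu⟩ := hw
    exact (Finset.mem_sdiff.1 hu).2
  have hcardB : B.card = 1 + A.card := by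
    rw [hB, Finset.card_insert_of_notMem hvA]; omega
  have hbi : A.card * (δ - 2) ≤ (A.biUnion T).card := by
    rw [Finset.card_biUnion h3]
    calc A.card * (δ - 2) = ∑ _u ∈ A, (δ - 2) := by rw [Finset.sum_const, smul_eq_mul, mul_comm]
      _ ≤ ∑ u ∈ A, (T u).card := Finset.sum_le_sum h2
  have htotal : (B ∪ A.biUnion T).card ≤ N := by
    simpa using Finset.card_le_card (Finset.subset_univ (B ∪ A.biUnion T))
  rw [Finset.card_union_of_disjoint hdisjB, hcardB] at htotal
  have hdeg : G.degree v = A.card := rfl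
  have : 1 + A.card + A.card * (δ - 2) ≤ N := by omega
  rw [hdeg]
  have hda : A.card * (δ - 1) = A.card + A.card * (δ - 2) := by
    have : δ - 1 = 1 + (δ - 2) := by omega
    rw [this, Nat.mul_add, Nat.mul_one]
  omega

/-- For integers `a ≥ 2` and `1 ≤ b ≤ a − 1`, with `c = 4a² + 2b` one has
`R(C₄, K_{1,c}) ≤ c + ⌈√c⌉`, and indeed `⌈√c⌉ = 2a + 1`. -/
theorem ramsey_C4_star_le_of_between_squares (a b : ℕ) (ha : 2 ≤ a) (hb1 : 1 ≤ b)
    (hb2 : b ≤ a - 1) :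
    ramseyNumber (SimpleGraph.cycleGraph 4) (starGraph (4 * a ^ 2 + 2 * b))
        ≤ (4 * a ^ 2 + 2 * b) + ⌈Real.sqrt ((4 * a ^ 2 + 2 * b : ℕ) : ℝ)⌉₊
      ∧ ⌈Real.sqrt ((4 * a ^ 2 + 2 * b : ℕ) : ℝ)⌉₊ = 2 * a + 1 := by
  classical
  set c : ℕ := 4 * a ^ 2 + 2 * b with hc
  have hba : b ≤ a - 1 := hb2
  have hba' : b + 1 ≤ a := by omega
  have hcR : ((c : ℕ) : ℝ) = 4 * (a : ℝ) ^ 2 + 2 * (b : ℝ) := by rw [hc]; push_cast; ring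
  have hbR : (1 : ℝ) ≤ (b : ℝ) := by exact_mod_cast hb1
  have haR : (b : ℝ) + 1 ≤ (a : ℝ) := by exact_mod_cast hba'
  have hceil : ⌈Real.sqrt ((c : ℕ) : ℝ)⌉₊ = 2 * a + 1 := by
    rw [Nat.ceil_eq_iff (by omega : 2 * a + 1 ≠ 0)]
    constructor
    · rw [show (2 * a + 1 - 1 : ℕ) = 2 * a by omega]
      rw [Real.lt_sqrt (by positivity)]
      push_cast
      nlinarith [hbR, hcR]
    · rw [Real.sqrt_le_iff]
      refine ⟨by positivity, ?_⟩
      push_cast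
      nlinarith [haR, hcR]
  refine ⟨?_, hceil⟩
  rw [hceil]
  set N : ℕ := c + (2 * a + 1) with hN
  apply Nat.sInf_le
  intro G
  by_cases hstar : ∃ v : Fin N, c ≤ Gᶜ.degree v
  · right
    obtain ⟨v, hv⟩ := hstar
    refine star_of_big_nbhd Gᶜ v (Gᶜ.neighborFinset v) ?_ ?_ hv
    · exact SimpleGraph.notMem_neighborFinset_self _ _
    · intro u hu; exact (SimpleGraph.mem_neighborFinset _ _ _).1 hu
  · left
    by_contra hC4
    push_neg at hstar
    have hdegN : ∀ v : Fin N, G.degree v + Gᶜ.degree v = N - 1 := by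
      intro v
      have hlt := SimpleGraph.degree_lt_card_verts (G := G) v
      rw [SimpleGraph.degree_compl]
      simp only [Fintype.card_fin] at hlt ⊢
      omega
    have hmin : ∀ v : Fin N, 2 * a + 1 ≤ G.degree v := by
      intro v
      have h1 := hstar v
      have h2 := hdegN v
      have : N - 1 = c + 2 * a := by omega
      omega
    have hloc : ∀ v : Fin N, 1 + G.degree v * (2 * a) ≤ N := by
      intro v
      have := local_count G hC4 v (2 * a + 1) hmin (by omega)
      simpa [show 2 * a + 1 - 1 = 2 * a by omega] using this
    have hreg : ∀ v : Fin N, G.degree v = 2 * a + 1 := by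
      intro v
      have h1 := hloc v
      have h2 := hmin v
      by_contra hne
      have h3 : 2 * a + 2 ≤ G.degree v := by omega
      have : 1 + (2 * a + 2) * (2 * a) ≤ N := le_trans (by nlinarith) h1
      have hNe : N = 4 * a ^ 2 + 2 * b + 2 * a + 1 := by rw [hN, hc]; ring
      nlinarith
    have hsum := SimpleGraph.sum_degrees_eq_twice_card_edges G
    rw [Finset.sum_congr rfl (fun v _ => hreg v)] at hsum
    rw [Finset.sum_const, Finset.card_univ, Fintype.card_fin, smul_eq_mul] at hsum
    have hNexpr : N = 4 * a ^ 2 + 2 * b + 2 * a + 1 := by rw [hN, hc]; ring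
    have hodd : Odd (N * (2 * a + 1)) := by
      refine Odd.mul ?_ ⟨a, by ring⟩
      exact ⟨2 * a ^ 2 + b + a, by rw [hNexpr]; ring⟩
    rw [hsum] at hodd
    simp [Nat.odd_iff, Nat.mul_mod_right] at hodd
end

section
/- If m is a natural number with m ≡ 2 (mod 6) and m ≥ 8, then R(C₄, K_{1, m²+3}) ≤ m² + m + 4. -/
open Finset


open Finset

section Helpers

variable {α : Type*} [DecidableEq α]

lemma even_card_sym_pairs [LinearOrder α] (R : α → α → Prop) [DecidableRel R]
    (hsym : ∀ a b, R a b → R b a) (hne : ∀ a b, R a b → a ≠ b) (s : Finset α) :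
    Even (((s ×ˢ s).filter fun p => R p.1 p.2).card) := by
  set P := (s ×ˢ s).filter fun p => R p.1 p.2 with hP
  have hsplit : P = (P.filter fun p => p.1 < p.2) ∪ (P.filter fun p => p.2 < p.1) := by
    ext p
    simp only [mem_union, mem_filter]
    constructor
    · intro hp
      rcases lt_or_gt_of_ne (hne _ _ (mem_filter.mp hp).2) with h | h
      · exact Or.inl ⟨hp, h⟩
      · exact Or.inr ⟨hp, h⟩
    · rintro (⟨h, _⟩ | ⟨h, _⟩) <;> exact h
  have hdisj : Disjoint (P.filter fun p => p.1 < p.2) (P.filter fun p => p.2 < p.1) := by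
    rw [Finset.disjoint_left]
    intro p h1 h2
    simp only [mem_filter] at h1 h2
    exact absurd h2.2 (not_lt.2 h1.2.le)
  have hmemswap : ∀ p ∈ P, (p.2, p.1) ∈ P := by
    intro p hp
    simp only [hP, mem_filter, mem_product] at hp ⊢
    exact ⟨⟨hp.1.2, hp.1.1⟩, hsym _ _ hp.2⟩
  have hcardeq : (P.filter fun p => p.1 < p.2).card = (P.filter fun p => p.2 < p.1).card := by
    apply Finset.card_bij (fun p _ => (p.2, p.1))
    · intro p hp
      rw [mem_filter] at hp ⊢
      exact ⟨hmemswap _ hp.1, hp.2⟩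
    · intro p hp q hq h
      have h1 := congrArg Prod.fst h
      have h2 := congrArg Prod.snd h
      simp only at h1 h2
      exact Prod.ext h2 h1
    · intro p hp
      rw [mem_filter] at hp
      exact ⟨(p.2, p.1), mem_filter.mpr ⟨hmemswap _ hp.1, hp.2⟩, rfl⟩
  rw [hsplit, Finset.card_union_of_disjoint hdisj, hcardeq]
  exact ⟨_, rfl⟩

lemma three_dvd_card_rot [LinearOrder α] (T : Finset (α × α × α))
    (hrot : ∀ t ∈ T, (t.2.1, t.2.2, t.1) ∈ T)
    (hd : ∀ t ∈ T, t.1 ≠ t.2.1 ∧ t.1 ≠ t.2.2 ∧ t.2.1 ≠ t.2.2) :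
    3 ∣ T.card := by
  classical
  set p1 : α × α × α → Prop := fun t => t.1 < t.2.1 ∧ t.1 < t.2.2 with hp1
  set p2 : α × α × α → Prop := fun t => t.2.1 < t.1 ∧ t.2.1 < t.2.2 with hp2
  set p3 : α × α × α → Prop := fun t => t.2.2 < t.1 ∧ t.2.2 < t.2.1 with hp3
  have hcover : T = (T.filter p1) ∪ ((T.filter p2) ∪ (T.filter p3)) := by
    ext t
    simp only [mem_union, mem_filter]
    constructor
    · intro ht
      obtain ⟨h12, h13, h23⟩ := hd t ht
      rcases lt_or_gt_of_ne h12 with ha | ha <;> rcases lt_or_gt_of_ne h23 with hb | hb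
      · exact Or.inl ⟨ht, ha, ha.trans hb⟩
      · rcases lt_or_gt_of_ne h13 with hc | hc
        · exact Or.inl ⟨ht, ha, hc⟩
        · exact Or.inr (Or.inr ⟨ht, hc, hb⟩)
      · exact Or.inr (Or.inl ⟨ht, ha, hb⟩)
      · exact Or.inr (Or.inr ⟨ht, (hb.trans ha), hb⟩)
    · rintro (⟨h, _⟩ | ⟨h, _⟩ | ⟨h, _⟩) <;> exact h
  have hdisj12 : Disjoint (T.filter p1) (T.filter p2) := by
    rw [Finset.disjoint_left]
    intro t h1 h2
    rw [mem_filter] at h1 h2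
    exact absurd h2.2.1 (not_lt.2 h1.2.1.le)
  have hdisj13 : Disjoint (T.filter p1) (T.filter p3) := by
    rw [Finset.disjoint_left]
    intro t h1 h2
    rw [mem_filter] at h1 h2
    exact absurd h2.2.1 (not_lt.2 h1.2.2.le)
  have hdisj23 : Disjoint (T.filter p2) (T.filter p3) := by
    rw [Finset.disjoint_left]
    intro t h1 h2
    rw [mem_filter] at h1 h2
    exact absurd h2.2.2 (not_lt.2 h1.2.2.le)
  -- rotation maps
  have hmap1 : ∀ t ∈ T.filter p1, (t.2.1, t.2.2, t.1) ∈ T.filter p3 := by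
    intro t ht
    rw [mem_filter] at ht ⊢
    exact ⟨hrot _ ht.1, ht.2.1, ht.2.2⟩
  have hmap3 : ∀ t ∈ T.filter p3, (t.2.1, t.2.2, t.1) ∈ T.filter p2 := by
    intro t ht
    rw [mem_filter] at ht ⊢
    exact ⟨hrot _ ht.1, ht.2.2, ht.2.1⟩
  have hmap2 : ∀ t ∈ T.filter p2, (t.2.1, t.2.2, t.1) ∈ T.filter p1 := by
    intro t ht
    rw [mem_filter] at ht ⊢
    exact ⟨hrot _ ht.1, ht.2.2, ht.2.1⟩
  have hinj : ∀ (t₁ t₂ : α × α × α), (t₁.2.1, t₁.2.2, t₁.1) = (t₂.2.1, t₂.2.2, t₂.1) → t₁ = t₂ := by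
    intro t₁ t₂ h
    simp only [Prod.mk.injEq] at h
    obtain ⟨h1, h2, h3⟩ := h
    exact Prod.ext h3 (Prod.ext h1 h2)
  have hc13 : (T.filter p1).card = (T.filter p3).card := by
    apply Finset.card_bij (fun t _ => (t.2.1, t.2.2, t.1)) hmap1
    · intro a ha b hb h; exact hinj _ _ h
    · intro b hb
      refine ⟨((b.2.1, b.2.2, b.1).2.1, (b.2.1, b.2.2, b.1).2.2, (b.2.1, b.2.2, b.1).1), ?_, rfl⟩
      exact hmap2 _ (hmap3 _ hb)
  have hc32 : (T.filter p3).card = (T.filter p2).card := by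
    apply Finset.card_bij (fun t _ => (t.2.1, t.2.2, t.1)) hmap3
    · intro a ha b hb h; exact hinj _ _ h
    · intro b hb
      refine ⟨((b.2.1, b.2.2, b.1).2.1, (b.2.1, b.2.2, b.1).2.2, (b.2.1, b.2.2, b.1).1), ?_, rfl⟩
      exact hmap1 _ (hmap2 _ hb)
  have hcard : T.card = (T.filter p1).card + ((T.filter p2).card + (T.filter p3).card) := by
    rw [← Finset.card_union_of_disjoint hdisj23,
      ← Finset.card_union_of_disjoint (Finset.disjoint_union_right.mpr ⟨hdisj12, hdisj13⟩),
      ← hcover]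
  exact ⟨(T.filter p1).card, by omega⟩

end Helpers




section Graph

variable {n : ℕ} (G : SimpleGraph (Fin n)) [DecidableRel G.Adj]

lemma card_adj_pairs (s : Finset (Fin n)) :
    ((s ×ˢ s).filter fun p => G.Adj p.1 p.2).card
      = ∑ y ∈ s, (s ∩ G.neighborFinset y).card := by
  rw [Finset.card_eq_sum_card_fiberwise
    (f := Prod.fst) (t := s) (fun p hp => (Finset.mem_product.mp (Finset.mem_filter.mp hp).1).1)]
  refine Finset.sum_congr rfl fun y hy => ?_
  apply Finset.card_bij (fun p _ => p.2)
  · intro p hp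
    simp only [mem_filter, mem_product] at hp
    obtain ⟨⟨⟨hp1, hp2⟩, hadj⟩, hfst⟩ := hp
    rw [Finset.mem_inter, SimpleGraph.mem_neighborFinset]
    exact ⟨hp2, hfst ▸ hadj⟩
  · intro p hp q hq h
    simp only [mem_filter] at hp hq
    exact Prod.ext (hp.2.trans hq.2.symm) h
  · intro z hz
    rw [Finset.mem_inter, SimpleGraph.mem_neighborFinset] at hz
    exact ⟨(y, z), Finset.mem_filter.mpr ⟨Finset.mem_filter.mpr
      ⟨Finset.mem_product.mpr ⟨hy, hz.1⟩, hz.2⟩, rfl⟩, rfl⟩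

lemma card_triples (T : Finset (Fin n × Fin n × Fin n))
    (hT : T = Finset.univ.filter fun t => G.Adj t.1 t.2.1 ∧ G.Adj t.1 t.2.2 ∧ G.Adj t.2.1 t.2.2) :
    T.card = ∑ a : Fin n,
      (((G.neighborFinset a ×ˢ G.neighborFinset a).filter fun p => G.Adj p.1 p.2)).card := by
  rw [Finset.card_eq_sum_card_fiberwise (f := Prod.fst) (t := Finset.univ)
    (fun t ht => Finset.mem_univ _)]
  refine Finset.sum_congr rfl fun a _ => ?_
  apply Finset.card_bij (fun t _ => t.2)
  · intro t ht
    simp only [hT, mem_filter, mem_univ, true_and] at ht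
    obtain ⟨⟨h1, h2, h3⟩, hfst⟩ := ht
    simp only [mem_filter, mem_product, SimpleGraph.mem_neighborFinset]
    exact ⟨⟨hfst ▸ h1, hfst ▸ h2⟩, h3⟩
  · intro p hp q hq h
    simp only [mem_filter] at hp hq
    exact Prod.ext (hp.2.trans hq.2.symm) h
  · intro p hp
    simp only [mem_filter, mem_product, SimpleGraph.mem_neighborFinset] at hp
    refine ⟨(a, p), Finset.mem_filter.mpr ⟨?_, rfl⟩, rfl⟩
    simp only [hT, mem_filter, mem_univ, true_and]
    exact ⟨hp.1.1, hp.1.2, hp.2⟩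

end Graph

lemma exists_deg_le (m : ℕ) (hm6 : m % 6 = 2) (hm8 : 8 ≤ m)
    (G : SimpleGraph (Fin (m ^ 2 + m + 4))) [DecidableRel G.Adj]
    (hCN : ∀ a b c d : Fin (m ^ 2 + m + 4), G.Adj a c → G.Adj a d → G.Adj b c → G.Adj b d →
      a = b ∨ c = d) :
    ∃ v, G.degree v ≤ m := by
  by_contra hcon
  push_neg at hcon
  set NB : Fin (m ^ 2 + m + 4) → Finset (Fin (m ^ 2 + m + 4)) :=
    fun a => G.neighborFinset a with hNB
  have hconc : ∀ a, m < (NB a).card := fun a => hcon a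
  set S : Fin (m ^ 2 + m + 4) → Finset (Fin (m ^ 2 + m + 4)) :=
    fun a => (NB a).biUnion (fun u => NB u \ {a}) with hS
  have hNcard : (Finset.univ : Finset (Fin (m ^ 2 + m + 4))).card = m ^ 2 + m + 4 := by simp
  have hdisjS : ∀ a, ∀ u ∈ NB a, ∀ u' ∈ NB a, u ≠ u' → Disjoint (NB u \ {a}) (NB u' \ {a}) := by
    intro a u hu u' hu' hne
    rw [Finset.disjoint_left]
    intro w hw hw'
    simp only [hNB, Finset.mem_sdiff, Finset.mem_singleton,
      SimpleGraph.mem_neighborFinset] at hw hw' hu hu'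
    rcases hCN u u' a w hu.symm hw.1 hu'.symm hw'.1 with h | h
    · exact hne h
    · exact hw.2 h.symm
  have hcardS : ∀ a, (S a).card = ∑ u ∈ NB a, ((NB u).card - 1) := by
    intro a
    rw [hS]
    rw [Finset.card_biUnion (hdisjS a)]
    refine Finset.sum_congr rfl fun u hu => ?_
    rw [Finset.card_sdiff_of_subset, Finset.card_singleton]
    rw [Finset.singleton_subset_iff, hNB, SimpleGraph.mem_neighborFinset]
    exact ((SimpleGraph.mem_neighborFinset G a u).mp hu).symm
  have hSsub : ∀ a, S a ⊆ Finset.univ \ {a} := by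
    intro a w hw
    rw [hS, Finset.mem_biUnion] at hw
    obtain ⟨u, hu, hw⟩ := hw
    rw [Finset.mem_sdiff] at hw
    rw [Finset.mem_sdiff]
    exact ⟨Finset.mem_univ _, hw.2⟩
  have huniv_sdiff : ∀ a : Fin (m ^ 2 + m + 4),
      ((Finset.univ : Finset (Fin (m ^ 2 + m + 4))) \ {a}).card = m ^ 2 + m + 3 := by
    intro a
    rw [Finset.card_sdiff_of_subset (by simp), hNcard, Finset.card_singleton]
    omega
  have hdeg : ∀ a, (NB a).card = m + 1 := by
    intro a
    have h1 : (NB a).card * m ≤ ∑ u ∈ NB a, ((NB u).card - 1) := by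
      calc (NB a).card * m = ∑ _u ∈ NB a, m := by rw [Finset.sum_const, smul_eq_mul]
        _ ≤ _ := Finset.sum_le_sum fun u _ => by have := hconc u; omega
    have h2 : ∑ u ∈ NB a, ((NB u).card - 1) ≤ m ^ 2 + m + 3 := by
      rw [← hcardS a]
      calc (S a).card ≤ (Finset.univ \ {a}).card := Finset.card_le_card (hSsub a)
        _ = m ^ 2 + m + 3 := huniv_sdiff a
    have h3 := hconc a
    have hpow : m ^ 2 = m * m := by ring
    by_contra hne
    have hd2 : m + 2 ≤ (NB a).card := by omega
    have h4 : (m + 2) * m ≤ (NB a).card * m := Nat.mul_le_mul_right m hd2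
    nlinarith
  have hcardS' : ∀ a, (S a).card = m ^ 2 + m := by
    intro a
    rw [hcardS a]
    have : ∀ u ∈ NB a, (NB u).card - 1 = m := fun u _ => by rw [hdeg u]; omega
    rw [Finset.sum_congr rfl this, Finset.sum_const, smul_eq_mul, hdeg a]
    ring
  -- the local pair counts
  set f : Fin (m ^ 2 + m + 4) → ℕ :=
    fun a => ((NB a ×ˢ NB a).filter fun p => G.Adj p.1 p.2).card with hf
  have hf_sum : ∀ a, f a = ∑ u ∈ NB a, (NB a ∩ NB u).card := fun a => card_adj_pairs G (NB a)
  have hcap_le : ∀ a u, a ≠ u → (NB a ∩ NB u).card ≤ 1 := by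
    intro a u hne
    apply Finset.card_le_one.mpr
    intro w hw w' hw'
    simp only [hNB, Finset.mem_inter, SimpleGraph.mem_neighborFinset] at hw hw'
    rcases hCN a u w w' hw.1 hw'.1 hw.2 hw'.2 with h | h
    · exact absurd h hne
    · exact h
  set Unm : Fin (m ^ 2 + m + 4) → Finset (Fin (m ^ 2 + m + 4)) :=
    fun a => (NB a).filter fun u => (NB a ∩ NB u).card = 0 with hUnm
  have hfU : ∀ a, f a + (Unm a).card = m + 1 := by
    intro a
    have hz : ∑ u ∈ (NB a).filter (fun u => (NB a ∩ NB u).card = 0), (NB a ∩ NB u).card = 0 := by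
      apply Finset.sum_eq_zero
      intro u hu
      exact (Finset.mem_filter.mp hu).2
    have ho : ∑ u ∈ (NB a).filter (fun u => ¬ (NB a ∩ NB u).card = 0), (NB a ∩ NB u).card
        = ((NB a).filter (fun u => ¬ (NB a ∩ NB u).card = 0)).card := by
      rw [Finset.card_eq_sum_ones]
      apply Finset.sum_congr rfl
      intro u hu
      rw [Finset.mem_filter] at hu
      have hle := hcap_le a u (G.ne_of_adj ((SimpleGraph.mem_neighborFinset G a u).mp hu.1))
      omega
    have hsplit := Finset.sum_filter_add_sum_filter_not (NB a)
      (fun u => (NB a ∩ NB u).card = 0) (fun u => (NB a ∩ NB u).card)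
    have hcards := Finset.card_filter_add_card_filter_not
      (s := NB a) (p := fun u => (NB a ∩ NB u).card = 0)
    rw [hdeg a] at hcards
    rw [hf_sum a]
    simp only [hUnm]
    omega
  have hUsub : ∀ a, Unm a ⊆ (Finset.univ \ {a}) \ S a := by
    intro a u hu
    rw [hUnm, Finset.mem_filter] at hu
    obtain ⟨huNB, hcap0⟩ := hu
    have hadj : G.Adj a u := (SimpleGraph.mem_neighborFinset G a u).mp huNB
    rw [Finset.mem_sdiff, Finset.mem_sdiff, Finset.mem_singleton]
    refine ⟨⟨Finset.mem_univ _, fun h => G.ne_of_adj hadj h.symm⟩, ?_⟩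
    intro huS
    rw [hS, Finset.mem_biUnion] at huS
    obtain ⟨u'', hu'', hmem⟩ := huS
    rw [Finset.mem_sdiff] at hmem
    have : u'' ∈ NB a ∩ NB u := by
      rw [Finset.mem_inter]
      refine ⟨hu'', ?_⟩
      rw [hNB, SimpleGraph.mem_neighborFinset]
      exact ((SimpleGraph.mem_neighborFinset G u'' u).mp hmem.1).symm
    have := Finset.card_pos.mpr ⟨u'', this⟩
    omega
  have hcomp3 : ∀ a, ((Finset.univ \ {a}) \ S a).card = 3 := by
    intro a
    rw [Finset.card_sdiff_of_subset (hSsub a), huniv_sdiff a, hcardS' a]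
    omega
  have hUle : ∀ a, (Unm a).card ≤ 3 := fun a =>
    (hcomp3 a) ▸ Finset.card_le_card (hUsub a)
  have hf_even : ∀ a, Even (f a) := fun a =>
    even_card_sym_pairs G.Adj (fun a b h => h.symm) (fun a b h => G.ne_of_adj h) (NB a)
  have hf_cases : ∀ a, f a = m - 2 ∨ f a = m := by
    intro a
    have h1 := hfU a
    have h2 := hUle a
    obtain ⟨k, hk⟩ := hf_even a
    omega
  -- triangle count
  set T : Finset (Fin (m ^ 2 + m + 4) × Fin (m ^ 2 + m + 4) × Fin (m ^ 2 + m + 4)) :=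
    Finset.univ.filter fun t => G.Adj t.1 t.2.1 ∧ G.Adj t.1 t.2.2 ∧ G.Adj t.2.1 t.2.2 with hT
  have hTcard : T.card = ∑ a, f a := card_triples G T hT
  have h3T : 3 ∣ T.card := by
    apply three_dvd_card_rot
    · intro t ht
      rw [hT, Finset.mem_filter] at ht ⊢
      exact ⟨Finset.mem_univ _, ht.2.2.2, ht.2.1.symm, ht.2.2.1.symm⟩
    · intro t ht
      rw [hT, Finset.mem_filter] at ht
      exact ⟨G.ne_of_adj ht.2.1, G.ne_of_adj ht.2.2.1, G.ne_of_adj ht.2.2.2⟩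
  -- existence of a vertex with f v = m - 2
  have hex : ∃ v, f v = m - 2 := by
    by_contra hall
    push_neg at hall
    have hallm : ∀ a, f a = m := fun a => (hf_cases a).resolve_left (hall a)
    have hTm : T.card = (m ^ 2 + m + 4) * m := by
      rw [hTcard, Finset.sum_congr rfl (fun a _ => hallm a), Finset.sum_const, smul_eq_mul,
        hNcard]
    obtain ⟨j, rfl⟩ : ∃ j, m = 6 * j + 2 := ⟨m / 6, by omega⟩
    obtain ⟨k, hk⟩ := h3T
    rw [hTm] at hk
    have hring : ((6 * j + 2) ^ 2 + (6 * j + 2) + 4) * (6 * j + 2)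
        = 3 * (72 * j ^ 3 + 84 * j ^ 2 + 40 * j + 6) + 2 := by ring
    omega
  obtain ⟨v, hfv⟩ := hex
  have hU3 : (Unm v).card = 3 := by have := hfU v; omega
  have hUeq : Unm v = (Finset.univ \ {v}) \ S v :=
    Finset.eq_of_subset_of_card_le (hUsub v) (by rw [hcomp3 v, hU3])
  have hB : ∀ w, w ≠ v → ¬ G.Adj v w → ∃ u0, G.Adj v u0 ∧ G.Adj u0 w := by
    intro w hwv hnadj
    by_cases hw : w ∈ S v
    · rw [hS, Finset.mem_biUnion] at hw
      obtain ⟨u0, hu0, hw⟩ := hw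
      rw [Finset.mem_sdiff] at hw
      exact ⟨u0, (SimpleGraph.mem_neighborFinset G v u0).mp hu0,
        ((SimpleGraph.mem_neighborFinset G u0 w).mp hw.1)⟩
    · exfalso
      have : w ∈ (Finset.univ \ {v}) \ S v := by
        rw [Finset.mem_sdiff, Finset.mem_sdiff, Finset.mem_singleton]
        exact ⟨⟨Finset.mem_univ _, hwv⟩, hw⟩
      rw [← hUeq, hUnm, Finset.mem_filter] at this
      exact hnadj ((SimpleGraph.mem_neighborFinset G v w).mp this.1)
  -- a matched pair
  have hpos : 0 < f v := by omega
  obtain ⟨⟨u, u'⟩, hpmem⟩ := Finset.card_pos.mp hpos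
  rw [Finset.mem_filter, Finset.mem_product] at hpmem
  obtain ⟨⟨huNB, hu'NB⟩, huu'⟩ := hpmem
  have hvu : G.Adj v u := (SimpleGraph.mem_neighborFinset G v u).mp huNB
  have hvu' : G.Adj v u' := (SimpleGraph.mem_neighborFinset G v u').mp hu'NB
  -- the odd set C
  set C : Finset (Fin (m ^ 2 + m + 4)) := (NB u' \ {v}) \ {u} with hC
  have hvNBu' : v ∈ NB u' := (SimpleGraph.mem_neighborFinset G u' v).mpr hvu'.symm
  have huNBu' : u ∈ NB u' \ {v} := by
    rw [Finset.mem_sdiff, Finset.mem_singleton]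
    exact ⟨(SimpleGraph.mem_neighborFinset G u' u).mpr huu'.symm, G.ne_of_adj hvu ∘ Eq.symm⟩
  have hCcard : C.card = m - 1 := by
    rw [hC, Finset.card_sdiff_of_subset (Finset.singleton_subset_iff.mpr huNBu'),
      Finset.card_sdiff_of_subset (Finset.singleton_subset_iff.mpr hvNBu'), Finset.card_singleton,
      Finset.card_singleton, hdeg u']
    omega
  have key : ∀ y ∈ C, (C ∩ NB y).card = 1 := by
    intro y hy
    rw [hC, Finset.mem_sdiff, Finset.mem_sdiff, Finset.mem_singleton, Finset.mem_singleton] at hy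
    obtain ⟨⟨hyNBu', hyv⟩, hyu⟩ := hy
    have hadjy : G.Adj u' y := (SimpleGraph.mem_neighborFinset G u' y).mp hyNBu'
    have hnvy : ¬ G.Adj v y := by
      intro h
      rcases hCN v u' u y hvu h huu'.symm hadjy with h1 | h1
      · exact G.ne_of_adj hvu' h1
      · exact hyu h1.symm
    have huniq : ∀ w w', G.Adj v w → G.Adj w y → G.Adj v w' → G.Adj w' y → w = w' := by
      intro w w' h1 h2 h3 h4
      rcases hCN v y w w' h1 h3 h2.symm h4.symm with h | h
      · exact absurd h.symm hyv
      · exact h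
    set D : Finset (Fin (m ^ 2 + m + 4)) := NB y \ {u'} with hD
    have hu'NBy : u' ∈ NB y := (SimpleGraph.mem_neighborFinset G y u').mpr hadjy.symm
    have hDcard : D.card = m := by
      rw [hD, Finset.card_sdiff_of_subset (Finset.singleton_subset_iff.mpr hu'NBy),
        Finset.card_singleton, hdeg y]
      omega
    have hDprop : ∀ z ∈ D, ¬ G.Adj v z ∧ z ≠ v ∧ z ≠ u' ∧ G.Adj y z := by
      intro z hz
      rw [hD, Finset.mem_sdiff, Finset.mem_singleton] at hz
      obtain ⟨hzNBy, hzu'⟩ := hz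
      have hyz : G.Adj y z := (SimpleGraph.mem_neighborFinset G y z).mp hzNBy
      have hnz : ¬ G.Adj v z := by
        intro h
        exact hzu' (huniq z u' h hyz.symm hvu' hadjy)
      have hzv : z ≠ v := by
        intro h
        rw [h] at hyz
        exact hnvy hyz.symm
      exact ⟨hnz, hzv, hzu', hyz⟩
    set F : Fin (m ^ 2 + m + 4) → Fin (m ^ 2 + m + 4) :=
      fun z => if h : ∃ u0, G.Adj v u0 ∧ G.Adj u0 z then h.choose else v with hFdef
    have hF : ∀ z ∈ D, G.Adj v (F z) ∧ G.Adj (F z) z := by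
      intro z hz
      obtain ⟨hnz, hzv, _, _⟩ := hDprop z hz
      have hexz : ∃ u0, G.Adj v u0 ∧ G.Adj u0 z := hB z hzv hnz
      rw [hFdef]
      simp only [dif_pos hexz]
      exact hexz.choose_spec
    have himg_sub : D.image F ⊆ NB v \ {u} := by
      intro w hw
      obtain ⟨z, hz, rfl⟩ := Finset.mem_image.mp hw
      obtain ⟨h1, h2⟩ := hF z hz
      obtain ⟨hnz, hzv, hzu', hyz⟩ := hDprop z hz
      rw [Finset.mem_sdiff, Finset.mem_singleton]
      refine ⟨(SimpleGraph.mem_neighborFinset G v (F z)).mpr h1, ?_⟩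
      intro h
      rw [h] at h2
      rcases hCN u y z u' h2 huu' hyz hadjy.symm with h' | h'
      · exact hyu h'.symm
      · exact hzu' h'
    have hinjD : Set.InjOn F ↑D := by
      intro z hz z' hz' heq
      rw [Finset.mem_coe] at hz hz'
      obtain ⟨h1, h2⟩ := hF z hz
      obtain ⟨h1', h2'⟩ := hF z' hz'
      obtain ⟨_, _, _, hyz⟩ := hDprop z hz
      obtain ⟨_, _, _, hyz'⟩ := hDprop z' hz'
      rw [← heq] at h2'
      rcases hCN (F z) y z z' h2 h2' hyz hyz' with h | h
      · exfalso
        rw [h] at h1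
        exact hnvy h1
      · exact h
    have himg_card : (D.image F).card = m := by
      rw [Finset.card_image_of_injOn hinjD, hDcard]
    have htarget : (NB v \ {u}).card = m := by
      rw [Finset.card_sdiff_of_subset (Finset.singleton_subset_iff.mpr huNB), Finset.card_singleton,
        hdeg v]
      omega
    have himg_eq : D.image F = NB v \ {u} :=
      Finset.eq_of_subset_of_card_le himg_sub (by rw [himg_card, htarget])
    have hu'img : u' ∈ D.image F := by
      rw [himg_eq, Finset.mem_sdiff, Finset.mem_singleton]
      exact ⟨hu'NB, fun h => G.ne_of_adj huu' h.symm⟩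
    obtain ⟨z, hzD, hzF⟩ := Finset.mem_image.mp hu'img
    have hzadj : G.Adj u' z := hzF ▸ (hF z hzD).2
    obtain ⟨hnz, hzv, hzu', hyz⟩ := hDprop z hzD
    have hzC : z ∈ C := by
      rw [hC, Finset.mem_sdiff, Finset.mem_sdiff, Finset.mem_singleton, Finset.mem_singleton]
      refine ⟨⟨(SimpleGraph.mem_neighborFinset G u' z).mpr hzadj, hzv⟩, ?_⟩
      intro h
      rw [h] at hnz
      exact hnz hvu
    have hzNy : z ∈ NB y := (SimpleGraph.mem_neighborFinset G y z).mpr hyz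
    apply le_antisymm
    · apply Finset.card_le_one.mpr
      intro w hw w' hw'
      rw [Finset.mem_inter] at hw hw'
      have hwu' : G.Adj u' w := by
        have := hw.1
        rw [hC, Finset.mem_sdiff, Finset.mem_sdiff] at this
        exact (SimpleGraph.mem_neighborFinset G u' w).mp this.1.1
      have hw'u' : G.Adj u' w' := by
        have := hw'.1
        rw [hC, Finset.mem_sdiff, Finset.mem_sdiff] at this
        exact (SimpleGraph.mem_neighborFinset G u' w').mp this.1.1
      have hwy : G.Adj y w := (SimpleGraph.mem_neighborFinset G y w).mp hw.2
      have hw'y : G.Adj y w' := (SimpleGraph.mem_neighborFinset G y w').mp hw'.2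
      rcases hCN u' y w w' hwu' hw'u' hwy hw'y with h | h
      · exact absurd h (G.ne_of_adj hadjy)
      · exact h
    · have : 0 < (C ∩ NB y).card :=
        Finset.card_pos.mpr ⟨z, Finset.mem_inter.mpr ⟨hzC, hzNy⟩⟩
      omega
  -- final parity contradiction
  have hPcard : ((C ×ˢ C).filter fun p => G.Adj p.1 p.2).card = m - 1 := by
    rw [card_adj_pairs G C, Finset.sum_congr rfl key, Finset.sum_const, smul_eq_mul, mul_one,
      hCcard]
  have hPeven := even_card_sym_pairs G.Adj (fun a b h => h.symm)
    (fun a b h => G.ne_of_adj h) C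
  obtain ⟨k, hk⟩ := hPeven
  rw [hPcard] at hk
  omega

/-- If `m ≡ 2 (mod 6)` and `m ≥ 8`, then `R(C₄, K_{1, m²+3}) ≤ m² + m + 4`. -/
theorem ramsey_C4_star_sq_add_three (m : ℕ) (hm : m % 6 = 2) (hm8 : 8 ≤ m) :
    ramseyNumber (SimpleGraph.cycleGraph 4) (starGraph (m ^ 2 + 3)) ≤ m ^ 2 + m + 4 := by
  apply Nat.sInf_le
  intro G
  classical
  letI : DecidableRel G.Adj := Classical.decRel _
  by_cases hC4 : ∃ a b c d : Fin (m ^ 2 + m + 4),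
      G.Adj a c ∧ G.Adj a d ∧ G.Adj b c ∧ G.Adj b d ∧ a ≠ b ∧ c ≠ d
  · left
    obtain ⟨a, b, c, d, hac, had, hbc, hbd, hab, hcd⟩ := hC4
    have h1 : a ≠ c := G.ne_of_adj hac
    have h2 : a ≠ d := G.ne_of_adj had
    have h3 : b ≠ c := G.ne_of_adj hbc
    have h4 : b ≠ d := G.ne_of_adj hbd
    have h1' := h1.symm; have h2' := h2.symm; have h3' := h3.symm; have h4' := h4.symm
    have hab' := hab.symm; have hcd' := hcd.symm
    refine ⟨⟨![a, c, b, d], ?_⟩, ?_⟩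
    · intro i j hij
      fin_cases i <;> fin_cases j <;> simp_all
    · intro i j hadj
      fin_cases i <;> fin_cases j <;>
        simp only [Matrix.cons_val_zero, Matrix.cons_val_one, Matrix.head_cons,
          Matrix.cons_val_two, Matrix.tail_cons, Matrix.cons_val_three, Matrix.cons_val_fin_one,
          Matrix.cons_val'] <;>
        first
          | exact absurd hadj (by decide)
          | exact hac | exact hac.symm | exact hbc | exact hbc.symm
          | exact hbd | exact hbd.symm | exact had | exact had.symm
  · right
    have hCN : ∀ a b c d : Fin (m ^ 2 + m + 4),
        G.Adj a c → G.Adj a d → G.Adj b c → G.Adj b d → a = b ∨ c = d := by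
      intro a b c d ha1 ha2 ha3 ha4
      by_contra hcon
      push_neg at hcon
      exact hC4 ⟨a, b, c, d, ha1, ha2, ha3, ha4, hcon.1, hcon.2⟩
    obtain ⟨v, hv⟩ := exists_deg_le m hm hm8 G hCN
    set Sv : Finset (Fin (m ^ 2 + m + 4)) := Finset.univ \ insert v (G.neighborFinset v)
      with hSv
    have hSvprop : ∀ w ∈ Sv, w ≠ v ∧ ¬ G.Adj v w := by
      intro w hw
      rw [hSv, Finset.mem_sdiff, Finset.mem_insert] at hw
      push_neg at hw
      exact ⟨hw.2.1, fun h => hw.2.2 ((SimpleGraph.mem_neighborFinset G v w).mpr h)⟩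
    have hcard : m ^ 2 + 3 ≤ Sv.card := by
      rw [hSv, Finset.card_sdiff_of_subset (Finset.subset_univ _)]
      have h1 : (insert v (G.neighborFinset v)).card ≤ m + 1 := by
        calc (insert v (G.neighborFinset v)).card ≤ (G.neighborFinset v).card + 1 :=
              Finset.card_insert_le _ _
          _ ≤ m + 1 := by
              rw [SimpleGraph.card_neighborFinset_eq_degree]
              omega
      have h2 : (Finset.univ : Finset (Fin (m ^ 2 + m + 4))).card = m ^ 2 + m + 4 := by simp
      omega
    obtain ⟨S', hS'sub, hS'card⟩ := Finset.exists_subset_card_eq hcard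
    set e := S'.equivFinOfCardEq hS'card with he
    have hmemS : ∀ i : Fin (m ^ 2 + 3), ((e.symm i : S') : Fin (m ^ 2 + m + 4)) ∈ Sv :=
      fun i => hS'sub (e.symm i).2
    refine ⟨⟨Sum.elim (fun _ => v) (fun i => ((e.symm i : S') : Fin (m ^ 2 + m + 4))), ?_⟩, ?_⟩
    · intro x y hxy
      match x, y with
      | Sum.inl x, Sum.inl y => exact congrArg Sum.inl (Subsingleton.elim x y)
      | Sum.inl x, Sum.inr y =>
        exfalso
        exact (hSvprop _ (hmemS y)).1 (by simpa using hxy.symm)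
      | Sum.inr x, Sum.inl y =>
        exfalso
        exact (hSvprop _ (hmemS x)).1 (by simpa using hxy)
      | Sum.inr x, Sum.inr y =>
        have : e.symm x = e.symm y := Subtype.ext (by simpa using hxy)
        exact congrArg Sum.inr (e.symm.injective this)
    · intro x y hxy
      match x, y with
      | Sum.inl x, Sum.inl y =>
        exact absurd hxy (by simp [starGraph, completeBipartiteGraph])
      | Sum.inr x, Sum.inr y =>
        exact absurd hxy (by simp [starGraph, completeBipartiteGraph])
      | Sum.inl x, Sum.inr y =>
        have h := hSvprop _ (hmemS y)
        show Gᶜ.Adj v ((e.symm y : S') : Fin (m ^ 2 + m + 4))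
        rw [SimpleGraph.compl_adj]
        exact ⟨fun hh => h.1 hh.symm, fun hh => h.2 hh⟩
      | Sum.inr x, Sum.inl y =>
        have h := hSvprop _ (hmemS x)
        show Gᶜ.Adj ((e.symm x : S') : Fin (m ^ 2 + m + 4)) v
        rw [SimpleGraph.compl_adj]
        exact ⟨fun hh => h.1 hh, fun hh => h.2 (G.adj_symm hh)⟩
end

section
/- Let m be a natural number with m ≡ 2 (mod 6) and m ≥ 8. If G is a simple graph on m² + m + 4 vertices containing no subgraph isomorphic to C₄ and whose complement contains no subgraph isomorphic to K_{1, m²+3}, then every vertex of G has degree exactly m + 1 (i.e., G is (m+1)-regular). -/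
/-- If a graph has no copy of `C₄`, then any "cycle" `a-b-c-d-a` with `a ≠ c` has `b = d`. -/
lemma aux_noC4 {V : Type*} {G : SimpleGraph V}
    (hC4 : ¬ G.ContainsCopy (SimpleGraph.cycleGraph 4))
    {a b c d : V} (hab : G.Adj a b) (hbc : G.Adj b c) (hcd : G.Adj c d)
    (hda : G.Adj d a) (hac : a ≠ c) : b = d := by
  by_contra hbd
  apply hC4
  have h1 := hab.ne; have h2 := hbc.ne; have h3 := hcd.ne; have h4 := hda.ne
  have h1' := hab.ne'; have h2' := hbc.ne'; have h3' := hcd.ne'; have h4' := hda.ne'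
  have hca := hac.symm; have hdb := Ne.symm hbd
  refine ⟨⟨![a, b, c, d], ?_⟩, ?_⟩
  · intro i j hij
    fin_cases i <;> fin_cases j <;> simp_all
  · intro i j hadj
    fin_cases i <;> fin_cases j <;>
      first
        | exact hab | exact hab.symm | exact hbc | exact hbc.symm
        | exact hcd | exact hcd.symm | exact hda | exact hda.symm
        | exact absurd hadj (by decide)

/-- If `m ≡ 2 (mod 6)`, `m ≥ 8`, and `G` is a graph on `m² + m + 4` vertices with no
copy of `C₄` whose complement has no copy of `K_{1, m²+3}`, then `G` is `(m+1)`-regular. -/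
theorem regular_of_C4_free_star_free (m : ℕ) (hm : m % 6 = 2) (hm8 : 8 ≤ m)
    (G : SimpleGraph (Fin (m ^ 2 + m + 4)))
    (hC4 : ¬ G.ContainsCopy (SimpleGraph.cycleGraph 4))
    (hstar : ¬ Gᶜ.ContainsCopy (starGraph (m ^ 2 + 3))) :
    ∀ v, (G.neighborSet v).ncard = m + 1 := by
  classical
  -- the complement has max degree at most m² + 2
  have hdegc : ∀ v, Gᶜ.degree v ≤ m ^ 2 + 2 := by
    intro v
    by_contra h
    push_neg at h
    have hcard : Fintype.card (Fin (m ^ 2 + 3)) ≤ Fintype.card (Gᶜ.neighborSet v) := by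
      rw [Fintype.card_fin, SimpleGraph.card_neighborSet_eq_degree (G := Gᶜ)]
      omega
    obtain ⟨f⟩ := Function.Embedding.nonempty_of_card_le hcard
    apply hstar
    have hne : ∀ i : Fin (m ^ 2 + 3), v ≠ (f i : Fin (m ^ 2 + m + 4)) := by
      intro i
      have : Gᶜ.Adj v (f i : Fin (m ^ 2 + m + 4)) := (f i).2
      exact this.ne
    refine ⟨⟨Sum.elim (fun _ => v) (fun i => (f i : Fin (m ^ 2 + m + 4))), ?_⟩, ?_⟩
    · intro x y hxy
      cases x with
      | inl a => cases y with
        | inl b => simp [Subsingleton.elim a b]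
        | inr b => exact absurd hxy (hne b)
      | inr a => cases y with
        | inl b => exact absurd hxy.symm (hne a)
        | inr b =>
          have : f a = f b := Subtype.ext hxy
          simp [f.injective this]
    · intro x y hxy
      cases x with
      | inl a => cases y with
        | inl b => simp [starGraph] at hxy
        | inr b => exact (SimpleGraph.mem_neighborSet _ _ _).1 (f b).2
      | inr a => cases y with
        | inl b => exact ((SimpleGraph.mem_neighborSet _ _ _).1 (f a).2).symm
        | inr b => simp [starGraph] at hxy
  -- every vertex of G has degree at least m + 1
  have hdeg_ge : ∀ v, m + 1 ≤ G.degree v := by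
    intro v
    have h1 : Gᶜ.degree v = Fintype.card (Fin (m ^ 2 + m + 4)) - 1 - G.degree v :=
      SimpleGraph.degree_compl G v
    rw [Fintype.card_fin] at h1
    have := hdegc v
    omega
  -- key consequence of C4-freeness
  have key : ∀ a b c d : Fin (m ^ 2 + m + 4), G.Adj a b → G.Adj b c → G.Adj c d → G.Adj d a →
      a ≠ c → b = d := fun a b c d hab hbc hcd hda hac =>
    aux_noC4 hC4 hab hbc hcd hda hac
  -- degree upper bound via counting
  have hdeg_le : ∀ v, G.degree v ≤ m + 1 := by
    intro v
    set A : Finset (Fin (m ^ 2 + m + 4)) := G.neighborFinset v with hA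
    set B : Finset (Fin (m ^ 2 + m + 4)) := Finset.univ \ insert v A with hB
    have hvA : v ∉ A := by simp [hA]
    have hBcard : B.card = m ^ 2 + m + 4 - (A.card + 1) := by
      rw [hB, Finset.card_sdiff_of_subset (Finset.subset_univ _), Finset.card_insert_of_notMem hvA]
      simp
    -- for each w ∈ A, w has at most one neighbor inside A
    have hAw : ∀ w ∈ A, (A.filter (fun x => G.Adj w x)).card ≤ 1 := by
      intro w hw
      rw [Finset.card_le_one]
      intro x hx y hy
      simp only [Finset.mem_filter] at hx hy
      have hvw : G.Adj v w := (G.mem_neighborFinset v w).1 hw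
      exact key v x w y ((G.mem_neighborFinset v x).1 hx.1) hx.2.symm hy.2
        ((G.mem_neighborFinset v y).1 hy.1).symm hvw.ne
    -- for each u ∈ B, u has at most one neighbor inside A
    have hBu : ∀ u ∈ B, (A.filter (fun w => G.Adj w u)).card ≤ 1 := by
      intro u hu
      rw [Finset.card_le_one]
      intro x hx y hy
      simp only [Finset.mem_filter] at hx hy
      have hvu : v ≠ u := by
        rw [hB] at hu
        simp only [Finset.mem_sdiff, Finset.mem_insert] at hu
        tauto
      exact key v x u y ((G.mem_neighborFinset v x).1 hx.1) hx.2 hy.2.symm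
        ((G.mem_neighborFinset v y).1 hy.1).symm hvu
    -- each w ∈ A has at least m - 1 neighbors in B
    have hlow : ∀ w ∈ A, m - 1 ≤ (B.filter (fun u => G.Adj w u)).card := by
      intro w hw
      have hset : B.filter (fun u => G.Adj w u) = G.neighborFinset w \ insert v A := by
        ext u
        simp only [hB, Finset.mem_filter, Finset.mem_sdiff, Finset.mem_univ, true_and,
          SimpleGraph.mem_neighborFinset]
        tauto
      rw [hset]
      have hsub : G.neighborFinset w ∩ insert v A ⊆ insert v (A.filter (fun x => G.Adj w x)) := by
        intro x hx
        simp only [Finset.mem_inter, Finset.mem_insert, SimpleGraph.mem_neighborFinset,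
          Finset.mem_filter] at hx ⊢
        tauto
      have h1 : (G.neighborFinset w ∩ insert v A).card ≤ 2 := by
        calc (G.neighborFinset w ∩ insert v A).card
            ≤ (insert v (A.filter (fun x => G.Adj w x))).card := Finset.card_le_card hsub
          _ ≤ (A.filter (fun x => G.Adj w x)).card + 1 := Finset.card_insert_le _ _
          _ ≤ 2 := by have := hAw w hw; omega
      have h2 : (G.neighborFinset w ∩ insert v A).card +
          (G.neighborFinset w \ insert v A).card = (G.neighborFinset w).card :=
        Finset.card_inter_add_card_sdiff _ _
      have h3 : m + 1 ≤ (G.neighborFinset w).card := hdeg_ge w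
      omega
    -- double counting
    have hswap : ∑ w ∈ A, (B.filter (fun u => G.Adj w u)).card
        = ∑ u ∈ B, (A.filter (fun w => G.Adj w u)).card := by
      simp_rw [Finset.card_filter]
      exact Finset.sum_comm
    have hcount1 : A.card * (m - 1) ≤ ∑ w ∈ A, (B.filter (fun u => G.Adj w u)).card := by
      calc A.card * (m - 1) = A.card • (m - 1) := by simp
        _ ≤ _ := Finset.card_nsmul_le_sum A _ _ hlow
    have hcount2 : ∑ u ∈ B, (A.filter (fun w => G.Adj w u)).card ≤ B.card * 1 := by
      calc ∑ u ∈ B, (A.filter (fun w => G.Adj w u)).card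
          ≤ B.card • 1 := Finset.sum_le_card_nsmul B _ _ hBu
        _ = B.card * 1 := by simp
    have hfinal : A.card * (m - 1) ≤ B.card := by
      rw [mul_one] at hcount2
      omega
    have hAdeg : A.card = G.degree v := rfl
    have hge : m + 1 ≤ A.card := hAdeg ▸ hdeg_ge v
    -- conclude : A.card ≤ m + 1
    rw [← hAdeg]
    by_contra hlt
    push_neg at hlt
    have h5 : (m + 2) * (m - 1) ≤ A.card * (m - 1) :=
      Nat.mul_le_mul_right _ (by omega)
    have h6 : A.card * (m - 1) ≤ m ^ 2 + m + 4 - (A.card + 1) := hBcard ▸ hfinal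
    have h7 : A.card + 1 ≤ m ^ 2 + m + 4 := by
      have := Finset.card_le_univ (insert v A)
      simp only [Finset.card_insert_of_notMem hvA, Finset.card_univ, Fintype.card_fin] at this
      omega
    have h8 : (m + 2) * (m - 1) + A.card + 1 ≤ m ^ 2 + m + 4 := by omega
    obtain ⟨k, rfl⟩ : ∃ k, m = k + 8 := ⟨m - 8, by omega⟩
    have hsub : k + 8 - 1 = k + 7 := by omega
    rw [hsub] at h8
    nlinarith [hlt, h8]
  intro v
  rw [Set.ncard_eq_toFinset_card', Set.toFinset_card, G.card_neighborSet_eq_degree]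
  exact le_antisymm (hdeg_le v) (hdeg_ge v)
end

section
/- Let m be a natural number with m ≡ 2 (mod 6) and m ≥ 8, and let G be an (m+1)-regular simple graph on m² + m + 4 vertices containing no subgraph isomorphic to C₄. Then for every vertex v of G, the number of edges of G with both endpoints in the neighborhood N(v) of v is either m/2 − 1 or m/2. -/
/-- If `m ≡ 2 (mod 6)`, `m ≥ 8`, and `G` is an `(m+1)`-regular `C₄`-free graph on
`m² + m + 4` vertices, then for every vertex `v` the number of edges with both endpoints
in the neighborhood of `v` is `m/2 − 1` or `m/2`. -/
theorem edges_in_neighborhood (m : ℕ) (hm : m % 6 = 2) (hm8 : 8 ≤ m)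
    (G : SimpleGraph (Fin (m ^ 2 + m + 4)))
    (hreg : ∀ v, (G.neighborSet v).ncard = m + 1)
    (hC4 : ¬ G.ContainsCopy (SimpleGraph.cycleGraph 4)) :
    ∀ v, ((G.induce (G.neighborSet v)).edgeSet).ncard = m / 2 - 1
      ∨ ((G.induce (G.neighborSet v)).edgeSet).ncard = m / 2 := by
  classical
  -- common neighbor lemma
  have hcn : ∀ a b x y : Fin (m ^ 2 + m + 4), a ≠ b → x ≠ y → G.Adj a x → G.Adj a y →
      G.Adj b x → G.Adj b y → False := by
    intro a b x y hab hxy hax hay hbx hby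
    apply hC4
    have hinj : Function.Injective (![a, x, b, y] : Fin 4 → Fin (m ^ 2 + m + 4)) := by
      intro i j hij
      fin_cases i <;> fin_cases j <;> simp_all <;>
        first
          | rfl
          | exact absurd hij hax.ne
          | exact absurd hij hax.ne'
          | exact absurd hij hay.ne
          | exact absurd hij hay.ne'
          | exact absurd hij hbx.ne
          | exact absurd hij hbx.ne'
          | exact absurd hij hby.ne
          | exact absurd hij hby.ne'
          | exact absurd hij hab
          | exact absurd hij hab.symm
          | exact absurd hij hxy
          | exact absurd hij hxy.symm
    refine ⟨⟨![a, x, b, y], hinj⟩, ?_⟩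
    intro i j hij
    fin_cases i <;> fin_cases j <;>
      simp_all [SimpleGraph.cycleGraph_adj] <;>
      first
        | exact absurd hij (by decide)
        | exact hax | exact hax.symm
        | exact hay | exact hay.symm
        | exact hbx | exact hbx.symm
        | exact hby | exact hby.symm
  intro v
  -- Finset setup
  have hdegG : ∀ u : Fin (m ^ 2 + m + 4),
      (Finset.univ.filter (fun w => G.Adj u w)).card = m + 1 := by
    intro u
    have h1 : G.neighborSet u = ↑(Finset.univ.filter (fun w => G.Adj u w)) := by
      ext w; simp [SimpleGraph.mem_neighborSet]
    have := hreg u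
    rw [h1, Set.ncard_coe_finset] at this
    exact this
  set s : Finset (Fin (m ^ 2 + m + 4)) := Finset.univ.filter (fun w => G.Adj v w) with hs
  have hsmem : ∀ w, w ∈ s ↔ G.Adj v w := by intro w; simp [hs]
  have hscard : s.card = m + 1 := hdegG v
  have hvs : v ∉ s := by simp [hs]
  set O : Finset (Fin (m ^ 2 + m + 4)) := Finset.univ \ insert v s with hO
  have hOcard : O.card = m ^ 2 + 2 := by
    rw [hO, Finset.card_sdiff_of_subset (Finset.subset_univ _), Finset.card_insert_of_notMem hvs,
      hscard, Finset.card_univ, Fintype.card_fin]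
    omega
  -- each vertex ≠ v has at most one neighbor in s
  have hone : ∀ w, w ≠ v → (s.filter (fun u => G.Adj u w)).card ≤ 1 := by
    intro w hw
    rw [Finset.card_le_one]
    intro x hx y hy
    by_contra hxy
    rw [Finset.mem_filter, hsmem] at hx hy
    exact hcn w v x y hw hxy hx.2.symm hy.2.symm hx.1 hy.1
  -- within s
  have hmatch : ∀ u ∈ s, (s.filter (fun w => G.Adj u w)).card ≤ 1 := by
    intro u hu
    rw [Finset.card_le_one]
    intro x hx y hy
    by_contra hxy
    rw [Finset.mem_filter, hsmem] at hx hy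
    exact hcn u v x y ((hsmem u).1 hu).ne' hxy hx.2 hy.2 hx.1 hy.1
  -- partition of neighborhood of u ∈ s
  have hpart : ∀ u ∈ s, (s.filter (fun w => G.Adj u w)).card
      + (O.filter (fun w => G.Adj u w)).card = m := by
    intro u hu
    have huv : G.Adj u v := ((hsmem u).1 hu).symm
    have hdisj : Disjoint s O := by
      rw [hO]
      intro t hts htO
      change t ⊆ s at hts
      change t ⊆ _ at htO
      intro x hx
      exact absurd (Finset.mem_insert_of_mem (hts hx)) (Finset.mem_sdiff.1 (htO hx)).2
    have huniv : insert v (s ∪ O) = (Finset.univ : Finset (Fin (m ^ 2 + m + 4))) := by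
      ext w
      simp only [Finset.mem_insert, Finset.mem_union, hO, Finset.mem_sdiff,
        Finset.mem_univ, iff_true, Finset.mem_insert]
      tauto
    have hvnot : v ∉ s ∪ O := by
      intro h
      rcases Finset.mem_union.1 h with h | h
      · exact hvs h
      · exact (Finset.mem_sdiff.1 h).2 (Finset.mem_insert_self v s)
    have := hdegG u
    rw [← huniv, Finset.filter_insert, if_pos huv,
      Finset.card_insert_of_notMem (fun h => hvnot (Finset.filter_subset _ _ h)),
      Finset.filter_union,
      Finset.card_union_of_disjoint (Finset.disjoint_filter_filter hdisj)] at this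
    omega
  -- the induced graph
  haveI : Fintype ↥(G.neighborSet v) := Fintype.ofFinite _
  set H := G.induce (G.neighborSet v) with hH
  haveI : DecidableRel H.Adj := Classical.decRel _
  -- degree in H
  have hHdeg : ∀ x : ↥(G.neighborSet v),
      H.degree x = (s.filter (fun w => G.Adj ↑x w)).card := by
    intro x
    rw [SimpleGraph.degree, SimpleGraph.neighborFinset]
    refine Finset.card_bij (fun y _ => (y : Fin (m ^ 2 + m + 4))) ?_ ?_ ?_
    · intro y hy
      rw [Set.mem_toFinset, SimpleGraph.mem_neighborSet] at hy
      rw [Finset.mem_filter, hsmem]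
      exact ⟨y.2, hy⟩
    · intro y₁ _ y₂ _ h
      exact Subtype.ext h
    · intro w hw
      rw [Finset.mem_filter, hsmem] at hw
      exact ⟨⟨w, hw.1⟩, by rw [Set.mem_toFinset]; exact hw.2, rfl⟩
  -- handshake
  have hhs : ∑ x : ↥(G.neighborSet v), H.degree x = 2 * H.edgeFinset.card :=
    SimpleGraph.sum_degrees_eq_twice_card_edges H
  have hsum : ∑ u ∈ s, (s.filter (fun w => G.Adj u w)).card = 2 * H.edgeFinset.card := by
    rw [← hhs]
    rw [Finset.sum_subtype s (p := fun x => x ∈ G.neighborSet v)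
      (fun x => by rw [hsmem]; exact Iff.rfl) (fun u => (s.filter (fun w => G.Adj u w)).card)]
    exact Finset.sum_congr rfl (fun x _ => (hHdeg x).symm)
  -- upper bound
  have hub : 2 * H.edgeFinset.card ≤ m + 1 := by
    rw [← hsum]
    calc ∑ u ∈ s, (s.filter (fun w => G.Adj u w)).card ≤ ∑ u ∈ s, 1 :=
          Finset.sum_le_sum hmatch
      _ = m + 1 := by rw [Finset.sum_const, smul_eq_mul, mul_one, hscard]
  -- lower bound via double counting
  have hdc : ∑ u ∈ s, (O.filter (fun w => G.Adj u w)).card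
      = ∑ w ∈ O, (s.filter (fun u => G.Adj u w)).card := by
    simp only [Finset.card_filter]
    rw [Finset.sum_comm]
  have hOb : ∑ w ∈ O, (s.filter (fun u => G.Adj u w)).card ≤ m ^ 2 + 2 := by
    calc ∑ w ∈ O, (s.filter (fun u => G.Adj u w)).card ≤ ∑ w ∈ O, 1 := by
          refine Finset.sum_le_sum ?_
          intro w hw
          refine hone w ?_
          rw [hO, Finset.mem_sdiff] at hw
          exact fun h => hw.2 (h ▸ Finset.mem_insert_self v s)
      _ = m ^ 2 + 2 := by rw [Finset.sum_const, smul_eq_mul, mul_one, hOcard]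
  have htot : 2 * H.edgeFinset.card + ∑ u ∈ s, (O.filter (fun w => G.Adj u w)).card
      = m ^ 2 + m := by
    rw [← hsum, ← Finset.sum_add_distrib]
    rw [Finset.sum_congr rfl hpart, Finset.sum_const, smul_eq_mul, hscard]
    ring
  have hlb : m - 2 ≤ 2 * H.edgeFinset.card := by
    rw [hdc] at htot
    omega
  -- convert ncard to edgeFinset.card
  have hconv : H.edgeSet.ncard = H.edgeFinset.card := by
    rw [Set.ncard_eq_toFinset_card', Set.toFinset_card, ← Set.toFinset_card]
    congr 1
  rw [hconv]
  omega
end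

section
/- For every natural number n ≥ 2, if R(C₄, K_{1,n}) > R(C₄, K_{1,n−1}), then R(C₄, K_{1, 2n+1−R(C₄,K_{1,n})}) ≥ n. -/
section Aux

open SimpleGraph Finset

/-- Transfer a copy along a graph-embedding-like map. -/
private lemma containsCopy_comp {U V W : Type*} {G : SimpleGraph V} {G' : SimpleGraph U}
    {H : SimpleGraph W} (g : U ↪ V) (hg : ∀ a b : U, G'.Adj a b → G.Adj (g a) (g b)) :
    G'.ContainsCopy H → G.ContainsCopy H := by
  rintro ⟨f, hf⟩
  exact ⟨f.trans g, fun a b hab => hg _ _ (hf hab)⟩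

/-- From a copy of a star, extract a center and a finset of `m` neighbors. -/
private lemma star_center {V : Type*} {F : SimpleGraph V} {m : ℕ}
    (h : F.ContainsCopy (_root_.starGraph m)) :
    ∃ (v : V) (s : Finset V), s.card = m ∧ ∀ u ∈ s, F.Adj v u := by
  obtain ⟨f, hf⟩ := h
  refine ⟨f (Sum.inl 0),
    Finset.univ.map ⟨fun i : Fin m => f (Sum.inr i),
      fun i j hij => Sum.inr_injective (f.injective hij)⟩, by simp, ?_⟩
  intro u hu
  simp only [Finset.mem_map, Function.Embedding.coeFn_mk, Finset.mem_univ, true_and] at hu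
  obtain ⟨i, _, rfl⟩ := hu
  exact hf (by simp [_root_.starGraph])

/-- Build a copy of a star from a center and `m` neighbors. -/
private lemma star_of {V : Type*} {F : SimpleGraph V} {m : ℕ} (v : V) (s : Finset V)
    (hc : s.card = m) (ha : ∀ u ∈ s, F.Adj v u) : F.ContainsCopy (_root_.starGraph m) := by
  let e := s.equivFinOfCardEq hc
  have hne : ∀ i : Fin m, v ≠ (e.symm i : V) := fun i => (ha _ (e.symm i).2).ne
  refine ⟨⟨Sum.elim (fun _ => v) (fun i => (e.symm i : V)), ?_⟩, ?_⟩
  · rintro (a | a) (b | b) hab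
    · simp [Subsingleton.elim a b]
    · exact absurd hab (hne b)
    · exact absurd hab.symm (hne a)
    · simp only [Sum.elim_inr] at hab
      exact congrArg Sum.inr (e.symm.injective (Subtype.coe_injective hab))
  · rintro (a | a) (b | b) hab
    · simp [_root_.starGraph] at hab
    · exact ha _ (e.symm b).2
    · exact (ha _ (e.symm a).2).symm
    · simp [_root_.starGraph] at hab

/-- Build a copy of `C₄` from a four-cycle `a — w — b — w' — a`. -/
private lemma c4_of {V : Type*} {G : SimpleGraph V} {a w b w' : V}
    (hab : a ≠ b) (hww : w ≠ w') (h1 : G.Adj a w) (h2 : G.Adj w b)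
    (h3 : G.Adj b w') (h4 : G.Adj w' a) : G.ContainsCopy (SimpleGraph.cycleGraph 4) := by
  have n1 : a ≠ w := h1.ne
  have n2 : w ≠ b := h2.ne
  have n3 : b ≠ w' := h3.ne
  have n4 : w' ≠ a := h4.ne
  have h1' := h1.symm; have h2' := h2.symm; have h3' := h3.symm; have h4' := h4.symm
  refine ⟨⟨![a, w, b, w'], ?_⟩, ?_⟩
  · intro i j hij
    fin_cases i <;> fin_cases j <;> simp_all
  · intro i j hij
    rw [SimpleGraph.cycleGraph_adj] at hij
    fin_cases i <;> fin_cases j <;> simp_all <;>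
      first
        | exact h1 | exact h1' | exact h2 | exact h2' | exact h3 | exact h3'
        | exact h4 | exact h4' | (exfalso; revert hij; decide)

/-- In a `C₄`-free graph, two distinct vertices have at most one common neighbor. -/
private lemma common_le_one {V : Type*} {G : SimpleGraph V}
    (hG : ¬ G.ContainsCopy (SimpleGraph.cycleGraph 4)) {a b : V} (hab : a ≠ b) {w w' : V}
    (h1 : G.Adj a w) (h2 : G.Adj b w) (h3 : G.Adj a w') (h4 : G.Adj b w') : w = w' := by
  by_contra hww
  exact hG (c4_of hab hww h1 h2.symm h4 h3.symm)

/-- Monotonicity of the Ramsey property in the number of vertices. -/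
private lemma ramsetMono {m N N' : ℕ} (hNN : N ≤ N')
    (hS : ∀ G : SimpleGraph (Fin N),
      G.ContainsCopy (SimpleGraph.cycleGraph 4) ∨ Gᶜ.ContainsCopy (_root_.starGraph m)) :
    ∀ G : SimpleGraph (Fin N'),
      G.ContainsCopy (SimpleGraph.cycleGraph 4) ∨ Gᶜ.ContainsCopy (_root_.starGraph m) := by
  intro G
  have hinj : Function.Injective (Fin.castLE hNN) := Fin.castLE_injective hNN
  rcases hS (SimpleGraph.comap (Fin.castLE hNN) G) with hc | hc
  · exact Or.inl (containsCopy_comp ⟨_, hinj⟩ (fun a b hab => hab) hc)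
  · refine Or.inr (containsCopy_comp ⟨_, hinj⟩ (fun a b hab => ?_) hc)
    rw [SimpleGraph.compl_adj] at hab ⊢
    exact ⟨fun hh => hab.1 (hinj hh), hab.2⟩

/-- The Ramsey property holds on `2m+2` vertices (crude bound, gives nonemptiness). -/
private lemma ramsetTop (m : ℕ) :
    ∀ G : SimpleGraph (Fin (2 * m + 2)),
      G.ContainsCopy (SimpleGraph.cycleGraph 4) ∨ Gᶜ.ContainsCopy (_root_.starGraph m) := by
  classical
  intro G
  by_cases hstar : Gᶜ.ContainsCopy (_root_.starGraph m)
  · exact Or.inr hstar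
  left
  have hdeg : ∀ v, m + 2 ≤ G.degree v := by
    intro v
    have h1 : Gᶜ.degree v < m := by
      by_contra hle
      push_neg at hle
      obtain ⟨t, hts, htc⟩ := Finset.exists_subset_card_eq
        (by rw [SimpleGraph.card_neighborFinset_eq_degree]; omega :
          m ≤ (Gᶜ.neighborFinset v).card)
      exact hstar (star_of v t htc fun u hu =>
        (SimpleGraph.mem_neighborFinset _ _ _).mp (hts hu))
    have h2 : Gᶜ.degree v = Fintype.card (Fin (2 * m + 2)) - 1 - G.degree v :=
      G.degree_compl v
    have h3 : G.degree v < Fintype.card (Fin (2 * m + 2)) := G.degree_lt_card_verts v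
    rw [Fintype.card_fin] at h2 h3
    omega
  obtain ⟨a, b, hab⟩ : ∃ a b : Fin (2 * m + 2), a ≠ b :=
    Fintype.exists_pair_of_one_lt_card (by rw [Fintype.card_fin]; omega)
  have hcap : 2 ≤ (G.neighborFinset a ∩ G.neighborFinset b).card := by
    have h1 := Finset.card_inter_add_card_union (G.neighborFinset a) (G.neighborFinset b)
    rw [SimpleGraph.card_neighborFinset_eq_degree,
      SimpleGraph.card_neighborFinset_eq_degree] at h1
    have h2 : (G.neighborFinset a ∪ G.neighborFinset b).card ≤ 2 * m + 2 := by
      calc _ ≤ Fintype.card (Fin (2 * m + 2)) := Finset.card_le_univ _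
        _ = 2 * m + 2 := Fintype.card_fin _
    have h3 := hdeg a
    have h4 := hdeg b
    omega
  obtain ⟨w, hw, w', hw', hww⟩ := Finset.one_lt_card.mp (lt_of_lt_of_le one_lt_two hcap)
  obtain ⟨hwa, hwb⟩ := Finset.mem_inter.mp hw
  obtain ⟨hwa', hwb'⟩ := Finset.mem_inter.mp hw'
  rw [SimpleGraph.mem_neighborFinset] at hwa hwb hwa' hwb'
  exact c4_of hab hww hwa hwb.symm hwb' hwa'.symm

end Aux

/-- For `n ≥ 2`, if `R(C₄, K_{1,n}) > R(C₄, K_{1,n−1})`, then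
`R(C₄, K_{1, 2n+1−R(C₄,K_{1,n})}) ≥ n`. -/
theorem ramsey_C4_star_ge_of_increase (n : ℕ) (hn : 2 ≤ n)
    (h : ramseyNumber (SimpleGraph.cycleGraph 4) (starGraph (n - 1))
        < ramseyNumber (SimpleGraph.cycleGraph 4) (starGraph n)) :
    n ≤ ramseyNumber (SimpleGraph.cycleGraph 4)
        (starGraph (2 * n + 1 - ramseyNumber (SimpleGraph.cycleGraph 4) (starGraph n))) := by
  classical
  have hmem : ∀ k : ℕ, ∀ G : SimpleGraph (Fin (ramseyNumber (SimpleGraph.cycleGraph 4) (starGraph k))),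
      G.ContainsCopy (SimpleGraph.cycleGraph 4) ∨ Gᶜ.ContainsCopy (starGraph k) := by
    intro k
    have hne : {N : ℕ | ∀ G : SimpleGraph (Fin N),
        G.ContainsCopy (SimpleGraph.cycleGraph 4) ∨ Gᶜ.ContainsCopy (starGraph k)}.Nonempty :=
      ⟨2 * k + 2, ramsetTop k⟩
    exact Nat.sInf_mem hne
  have hle : ∀ (k N : ℕ),
      (∀ G : SimpleGraph (Fin N),
        G.ContainsCopy (SimpleGraph.cycleGraph 4) ∨ Gᶜ.ContainsCopy (starGraph k)) →
      ramseyNumber (SimpleGraph.cycleGraph 4) (starGraph k) ≤ N := by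
    intro k N hN
    exact Nat.sInf_le hN
  set r := ramseyNumber (SimpleGraph.cycleGraph 4) (starGraph n) with hrdef
  set m := 2 * n + 1 - r with hmdef
  have hr1 : 1 ≤ r := lt_of_le_of_lt (Nat.zero_le _) h
  -- a counterexample graph on `r - 1` vertices
  have hnotn : ¬ ∀ G : SimpleGraph (Fin (r - 1)),
      G.ContainsCopy (SimpleGraph.cycleGraph 4) ∨ Gᶜ.ContainsCopy (starGraph n) := by
    intro hs
    have := hle n (r - 1) hs
    omega
  push_neg at hnotn
  obtain ⟨G, hG1, hG2⟩ := hnotn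
  -- `r - 1` vertices satisfy the `(n-1)`-Ramsey property
  have hSr1 : ∀ G' : SimpleGraph (Fin (r - 1)),
      G'.ContainsCopy (SimpleGraph.cycleGraph 4) ∨ G'ᶜ.ContainsCopy (starGraph (n - 1)) :=
    ramsetMono (by omega) (hmem (n - 1))
  obtain ⟨v, s0, hs0card, hs0adj⟩ := star_center ((hSr1 G).resolve_left hG1)
  -- degree bounds in `G`
  have hdegub : ∀ u : Fin (r - 1), Gᶜ.degree u ≤ n - 1 := by
    intro u
    by_contra hgt
    push_neg at hgt
    obtain ⟨t, hts, htc⟩ := Finset.exists_subset_card_eq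
      (by rw [SimpleGraph.card_neighborFinset_eq_degree]; omega :
        n ≤ (Gᶜ.neighborFinset u).card)
    exact hG2 (star_of u t htc fun y hy => (SimpleGraph.mem_neighborFinset _ _ _).mp (hts hy))
  have hcompl : ∀ u : Fin (r - 1),
      Gᶜ.degree u = r - 1 - 1 - G.degree u ∧ G.degree u < r - 1 := by
    intro u
    have h2 : Gᶜ.degree u = Fintype.card (Fin (r - 1)) - 1 - G.degree u :=
      G.degree_compl u
    have h3 : G.degree u < Fintype.card (Fin (r - 1)) := G.degree_lt_card_verts u
    rw [Fintype.card_fin] at h2 h3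
    exact ⟨h2, h3⟩
  have hdeglb : ∀ u : Fin (r - 1), r ≤ G.degree u + n + 1 := by
    intro u
    have := hcompl u
    have := hdegub u
    omega
  have hdegvc : Gᶜ.degree v = n - 1 := by
    refine le_antisymm (hdegub v) ?_
    have hsub : s0 ⊆ Gᶜ.neighborFinset v := fun y hy =>
      (SimpleGraph.mem_neighborFinset _ _ _).mpr (hs0adj y hy)
    calc n - 1 = s0.card := hs0card.symm
      _ ≤ (Gᶜ.neighborFinset v).card := Finset.card_le_card hsub
      _ = _ := Gᶜ.card_neighborFinset_eq_degree v
  have hdegv : G.degree v = r - n - 1 := by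
    have := hcompl v
    omega
  -- the set of non-neighbors of `v` (excluding `v`)
  set T : Finset (Fin (r - 1)) := Finset.univ \ insert v (G.neighborFinset v) with hT
  have hTmem : ∀ x, x ∈ T ↔ (x ≠ v ∧ ¬ G.Adj v x) := by
    intro x
    simp [hT, not_or]
  have hTcard : T.card = n - 1 := by
    have hvn : v ∉ G.neighborFinset v := by simp
    have h1 : (insert v (G.neighborFinset v)).card = G.degree v + 1 := by
      rw [Finset.card_insert_of_notMem hvn, SimpleGraph.card_neighborFinset_eq_degree]
    rw [hT, Finset.card_sdiff_of_subset (Finset.subset_univ _), Finset.card_univ, Fintype.card_fin, h1,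
      hdegv]
    have := hcompl v
    omega
  have e : {x // x ∈ T} ≃ Fin (n - 1) := T.equivFinOfCardEq hTcard
  set g : Fin (n - 1) → Fin (r - 1) := fun i => (e.symm i : Fin (r - 1)) with hg
  have hginj : Function.Injective g := fun i j hij =>
    e.symm.injective (Subtype.coe_injective hij)
  have hgT : ∀ i, g i ∈ T := fun i => (e.symm i).2
  -- the induced graph on `T`, as a graph on `Fin (n-1)`, is a counterexample for `m`
  have hHnot : ¬ ∀ G' : SimpleGraph (Fin (n - 1)),
      G'.ContainsCopy (SimpleGraph.cycleGraph 4) ∨ G'ᶜ.ContainsCopy (starGraph m) := by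
    intro hs
    rcases hs (SimpleGraph.comap g G) with hc | hc
    · exact hG1 (containsCopy_comp ⟨g, hginj⟩ (fun a b hab => hab) hc)
    obtain ⟨u0, t, htcard, htadj⟩ := star_center hc
    set x := g u0 with hx
    have hxT : x ∈ T := hgT u0
    obtain ⟨hxv, hxadj⟩ := (hTmem x).mp hxT
    set L : Finset (Fin (r - 1)) := t.map ⟨g, hginj⟩ with hL
    have hLcard : L.card = m := by simp [hL, htcard]
    have hLT : ∀ y ∈ L, y ∈ T ∧ y ≠ x ∧ ¬ G.Adj x y := by
      intro y hy
      simp only [hL, Finset.mem_map, Function.Embedding.coeFn_mk] at hy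
      obtain ⟨j, hj, rfl⟩ := hy
      have hadj := htadj j hj
      rw [SimpleGraph.compl_adj] at hadj
      exact ⟨hgT j, fun hgj => hadj.1 (hginj hgj).symm, fun ha => hadj.2 ha⟩
    set Nx : Finset (Fin (r - 1)) := G.neighborFinset x ∩ T with hNx
    have hdisj : Disjoint L Nx := by
      rw [Finset.disjoint_left]
      intro y hyL hyNx
      exact (hLT y hyL).2.2
        ((SimpleGraph.mem_neighborFinset _ _ _).mp (Finset.mem_inter.mp hyNx).1)
    have hxL : x ∉ L := fun hxL => (hLT x hxL).2.1 rfl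
    have hxNx : x ∉ Nx := by simp [hNx]
    have hsubT : insert x (L ∪ Nx) ⊆ T := by
      intro y hy
      rcases Finset.mem_insert.mp hy with rfl | hy
      · exact hxT
      rcases Finset.mem_union.mp hy with h' | h'
      · exact (hLT y h').1
      · exact (Finset.mem_inter.mp h').2
    have hcount : m + Nx.card + 1 ≤ n - 1 := by
      have h1 : (insert x (L ∪ Nx)).card = L.card + Nx.card + 1 := by
        rw [Finset.card_insert_of_notMem (by simp [hxL, hxNx]),
          Finset.card_union_of_disjoint hdisj]
      have h2 := Finset.card_le_card hsubT
      rw [h1, hTcard, hLcard] at h2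
      omega
    -- `x` has at most one neighbor outside `T`
    have hout : (G.neighborFinset x \ T).card ≤ 1 := by
      apply Finset.card_le_one.mpr
      intro y hy y' hy'
      obtain ⟨hyN, hyT⟩ := Finset.mem_sdiff.mp hy
      obtain ⟨hy'N, hy'T⟩ := Finset.mem_sdiff.mp hy'
      rw [SimpleGraph.mem_neighborFinset] at hyN hy'N
      have hyv : G.Adj v y := by
        by_contra hnv
        exact hyT ((hTmem y).mpr ⟨fun hyveq => hxadj (by rw [← hyveq]; exact hyN.symm), hnv⟩)
      have hy'v : G.Adj v y' := by
        by_contra hnv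
        exact hy'T ((hTmem y').mpr ⟨fun hyveq => hxadj (by rw [← hyveq]; exact hy'N.symm), hnv⟩)
      exact common_le_one hG1 hxv hyN hyv hy'N hy'v
    have hdx : (G.neighborFinset x).card = G.degree x :=
      G.card_neighborFinset_eq_degree x
    have hsplit := Finset.card_inter_add_card_sdiff (G.neighborFinset x) T
    rw [← hNx] at hsplit
    have hrx := hdeglb x
    omega
  -- conclude
  by_contra hlt
  push_neg at hlt
  exact hHnot (ramsetMono (by omega) (hmem m))
end

section
/- R(C₄, K_{1,33}) = 40. -/
def nbrsN : Nat → List Nat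
  | 0 => [1, 12, 13, 18, 26, 33]
  | 1 => [0, 2, 14, 19, 27, 34]
  | 2 => [1, 3, 15, 20, 28, 35]
  | 3 => [2, 4, 16, 21, 29, 36]
  | 4 => [3, 5, 17, 22, 30, 37]
  | 5 => [4, 6, 18, 23, 31, 38]
  | 6 => [5, 7, 19, 24, 26, 32]
  | 7 => [6, 8, 20, 25, 27, 33]
  | 8 => [7, 9, 13, 21, 28, 34]
  | 9 => [8, 10, 14, 22, 29, 35]
  | 10 => [9, 11, 15, 23, 30, 36]
  | 11 => [10, 12, 16, 24, 31, 37]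
  | 12 => [0, 11, 17, 25, 32, 38]
  | 13 => [0, 8, 16, 23, 26, 28]
  | 14 => [1, 9, 17, 24, 27, 29]
  | 15 => [2, 10, 18, 25, 28, 30]
  | 16 => [3, 11, 13, 19, 29, 31]
  | 17 => [4, 12, 14, 20, 30, 32]
  | 18 => [0, 5, 15, 21, 31, 33]
  | 19 => [1, 6, 16, 22, 32, 34]
  | 20 => [2, 7, 17, 23, 33, 35]
  | 21 => [3, 8, 18, 24, 34, 36]
  | 22 => [4, 9, 19, 25, 35, 37]
  | 23 => [5, 10, 13, 20, 36, 38]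
  | 24 => [6, 11, 14, 21, 26, 37]
  | 25 => [7, 12, 15, 22, 27, 38]
  | 26 => [0, 6, 13, 24, 30, 35]
  | 27 => [1, 7, 14, 25, 31, 36]
  | 28 => [2, 8, 13, 15, 32, 37]
  | 29 => [3, 9, 14, 16, 33, 38]
  | 30 => [4, 10, 15, 17, 26, 34]
  | 31 => [5, 11, 16, 18, 27, 35]
  | 32 => [6, 12, 17, 19, 28, 36]
  | 33 => [0, 7, 18, 20, 29, 37]
  | 34 => [1, 8, 19, 21, 30, 38]
  | 35 => [2, 9, 20, 22, 26, 31]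
  | 36 => [3, 10, 21, 23, 27, 32]
  | 37 => [4, 11, 22, 24, 28, 33]
  | 38 => [5, 12, 23, 25, 29, 34]
  | _ => []

open SimpleGraph hiding starGraph
open Finset

lemma symmAux : ∀ x y : Fin 39, y.val ∈ nbrsN x.val → x.val ∈ nbrsN y.val := by decide

lemma looplessAux : ∀ x : Fin 39, ¬ x.val ∈ nbrsN x.val := by decide

/-- A `C₄`-free graph on 39 vertices with minimum degree 6 (a Cayley graph of `C13 ⋊ C3`). -/
def G39 : SimpleGraph (Fin 39) where
  Adj x y := y.val ∈ nbrsN x.val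
  symm := ⟨fun x y h => symmAux x y h⟩
  loopless := ⟨fun x h => looplessAux x h⟩

instance : DecidableRel G39.Adj := fun x y => inferInstanceAs (Decidable (y.val ∈ nbrsN x.val))

instance : DecidableRel (G39ᶜ).Adj := fun x y =>
  inferInstanceAs (Decidable (x ≠ y ∧ ¬ G39.Adj x y))

lemma deg39 : ∀ x : Fin 39, G39.degree x = 6 := by decide

lemma cfour : ∀ x y : Fin 39, x ≠ y →
    ((nbrsN x.val).filter (fun a => decide (a ∈ nbrsN y.val))).length ≤ 1 := by decide

/-- No two distinct vertices of `G39` have two distinct common neighbours. -/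
lemma key39 : ∀ x y z w : Fin 39, x ≠ y → z ≠ w →
    G39.Adj x z → G39.Adj x w → G39.Adj y z → G39.Adj y w → False := by
  intro x y z w hxy hzw axz axw ayz ayw
  have hlen := cfour x y hxy
  set l := (nbrsN x.val).filter (fun a => decide (a ∈ nbrsN y.val)) with hl
  have hz : z.val ∈ l := List.mem_filter.2 ⟨axz, decide_eq_true ayz⟩
  have hw : w.val ∈ l := List.mem_filter.2 ⟨axw, decide_eq_true ayw⟩
  have hne : z.val ≠ w.val := fun h => hzw (Fin.val_injective h)
  have hsub : ({z.val, w.val} : Finset ℕ) ⊆ l.toFinset := by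
    intro a ha
    simp only [Finset.mem_insert, Finset.mem_singleton] at ha
    rcases ha with rfl | rfl <;> simpa using (by assumption : _ ∈ l)
  have h2 : 2 ≤ l.toFinset.card := by
    have := Finset.card_le_card hsub
    rwa [Finset.card_pair hne] at this
  have := l.toFinset_card_le
  omega

lemma no_c4 : ¬ G39.ContainsCopy (SimpleGraph.cycleGraph 4) := by
  rintro ⟨f, hf⟩
  have h01 : G39.Adj (f 0) (f 1) := hf (by decide)
  have h12 : G39.Adj (f 1) (f 2) := hf (by decide)
  have h23 : G39.Adj (f 2) (f 3) := hf (by decide)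
  have h30 : G39.Adj (f 3) (f 0) := hf (by decide)
  exact key39 (f 1) (f 3) (f 0) (f 2)
    (fun h => by simpa using f.injective h)
    (fun h => by simpa using f.injective h)
    h01.symm h12 h30 h23.symm

lemma no_star : ¬ (G39ᶜ).ContainsCopy (starGraph 33) := by
  rintro ⟨f, hf⟩
  set u := f (Sum.inl 0) with hu
  have hmem : ∀ i : Fin 33, f (Sum.inr i) ∈ (G39ᶜ).neighborFinset u := fun i =>
    (SimpleGraph.mem_neighborFinset _ _ _).2 (hf (Or.inl ⟨rfl, rfl⟩))
  have hcard : 33 ≤ (G39ᶜ).degree u := by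
    have := Finset.card_le_card_of_injOn (s := (Finset.univ : Finset (Fin 33)))
      (fun i : Fin 33 => f (Sum.inr i)) (fun i _ => hmem i)
      (fun i _ j _ h => by simpa using f.injective h)
    simpa using this
  have hdc : (G39ᶜ).degree u = 32 := by
    rw [SimpleGraph.degree_compl, deg39]
    simp
  omega

lemma not_mem_below (n : ℕ) (hn : n ≤ 39) :
    ¬ (∀ G : SimpleGraph (Fin n),
        G.ContainsCopy (SimpleGraph.cycleGraph 4) ∨ Gᶜ.ContainsCopy (starGraph 33)) := by
  intro h
  have hinj : Function.Injective (Fin.castLE hn) := Fin.castLE_injective hn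
  obtain ⟨f, hf⟩ | ⟨f, hf⟩ := h (G39.comap (Fin.castLE hn))
  · exact no_c4 ⟨f.trans ⟨Fin.castLE hn, hinj⟩, fun a b hab => hf hab⟩
  · refine no_star ⟨f.trans ⟨Fin.castLE hn, hinj⟩, fun a b hab => ?_⟩
    have := hf hab
    rw [SimpleGraph.compl_adj] at this ⊢
    exact ⟨fun hc => this.1 (hinj hc), this.2⟩

section Upper

variable (G : SimpleGraph (Fin 40)) [DecidableRel G.Adj]

lemma star_of_small_degree (v : Fin 40) (hv : G.degree v ≤ 6) :
    Gᶜ.ContainsCopy (starGraph 33) := by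
  classical
  have hdc : 33 ≤ (Gᶜ).degree v := by
    rw [SimpleGraph.degree_compl]
    simp only [Fintype.card_fin]
    omega
  obtain ⟨s, hs, hcard⟩ := Finset.exists_subset_card_eq hdc
  have e : s ≃ Fin 33 := s.equivFinOfCardEq hcard
  have hvs : v ∉ s := fun hvs =>
    (Gᶜ).irrefl ((SimpleGraph.mem_neighborFinset _ _ _).1 (hs hvs))
  have hadj : ∀ i : Fin 33, (Gᶜ).Adj v ((e.symm i : s) : Fin 40) := fun i =>
    (SimpleGraph.mem_neighborFinset _ _ _).1 (hs (e.symm i).2)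
  refine ⟨⟨Sum.elim (fun _ => v) (fun i => ((e.symm i : s) : Fin 40)), ?_⟩, ?_⟩
  · rintro (a | a) (b | b) h
    · simp [Subsingleton.elim a b]
    · simp only [Sum.elim_inl, Sum.elim_inr] at h
      exact absurd (by rw [h]; exact (e.symm b).2) hvs
    · simp only [Sum.elim_inl, Sum.elim_inr] at h
      exact absurd (by rw [← h]; exact (e.symm a).2) hvs
    · simp only [Sum.elim_inr] at h
      have : e.symm a = e.symm b := Subtype.ext h
      simpa using e.symm.injective this
  · rintro (a | a) (b | b) hab
    · exact absurd hab (by simp [starGraph, completeBipartiteGraph])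
    · exact hadj b
    · exact (hadj a).symm
    · exact absurd hab (by simp [starGraph, completeBipartiteGraph])

lemma c4_of_common (x y z w : Fin 40) (hxy : x ≠ y) (hzw : z ≠ w)
    (axz : G.Adj x z) (axw : G.Adj x w) (ayz : G.Adj y z) (ayw : G.Adj y w) :
    G.ContainsCopy (SimpleGraph.cycleGraph 4) := by
  refine ⟨⟨![z, x, w, y], ?_⟩, ?_⟩
  · intro a b h
    fin_cases a <;> fin_cases b <;> simp_all <;>
      first
        | rfl
        | exact absurd h axz.ne'
        | exact absurd h hzw
        | exact absurd h ayz.ne'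
        | exact absurd h.symm axz.ne'
        | exact absurd h axw.ne
        | exact absurd h hxy
        | exact absurd h.symm hzw
        | exact absurd h.symm axw.ne
        | exact absurd h ayw.ne'
        | exact absurd h.symm ayz.ne'
        | exact absurd h.symm hxy
        | exact absurd h.symm ayw.ne'
  · intro a b hab
    rw [SimpleGraph.cycleGraph_adj] at hab
    fin_cases a <;> fin_cases b <;> revert hab <;>
      simp only [Matrix.cons_val_zero, Matrix.cons_val_one, Matrix.head_cons,
        Matrix.cons_val_two, Matrix.tail_cons, Matrix.cons_val_three] <;>
      intro hab <;>
      first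
        | exact axz.symm
        | exact axw
        | exact ayw.symm
        | exact ayz
        | exact axz
        | exact axw.symm
        | exact ayw
        | exact ayz.symm
        | exact absurd hab (by decide)

lemma upper : ∀ H : SimpleGraph (Fin 40),
    H.ContainsCopy (SimpleGraph.cycleGraph 4) ∨ Hᶜ.ContainsCopy (starGraph 33) := by
  intro H
  classical
  by_contra hcon
  push_neg at hcon
  obtain ⟨h1, h2⟩ := hcon
  have hdeg : ∀ v, 7 ≤ H.degree v := by
    intro v
    by_contra h
    exact h2 (star_of_small_degree H v (by omega))
  have key : ∀ x y z w : Fin 40, x ≠ y → z ≠ w →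
      H.Adj x z → H.Adj x w → H.Adj y z → H.Adj y w → False := by
    intro x y z w hxy hzw axz axw ayz ayw
    exact h1 (c4_of_common H x y z w hxy hzw axz axw ayz ayw)
  set T := (Finset.univ : Finset (Fin 40)).sigma
      (fun v => (H.neighborFinset v).powersetCard 2) with hT
  have hTcard : T.card = ∑ v : Fin 40, (H.degree v).choose 2 := by
    rw [hT, Finset.card_sigma]
    refine Finset.sum_congr rfl fun v _ => ?_
    rw [Finset.card_powersetCard, SimpleGraph.degree]
  have h840 : 840 ≤ T.card := by
    rw [hTcard]
    calc (840 : ℕ) = ∑ _v : Fin 40, 21 := by rw [Finset.sum_const]; rfl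
      _ ≤ ∑ v : Fin 40, (H.degree v).choose 2 := by
          refine Finset.sum_le_sum fun v _ => ?_
          calc (21 : ℕ) = Nat.choose 7 2 := by decide
            _ ≤ (H.degree v).choose 2 := Nat.choose_le_choose 2 (hdeg v)
  have hle : T.card ≤ 780 := by
    have hmap : T.card ≤ ((Finset.univ : Finset (Fin 40)).powersetCard 2).card := by
      refine Finset.card_le_card_of_injOn (fun p => p.2) ?_ ?_
      · intro p hp
        simp only [Finset.mem_coe] at hp ⊢
        rw [hT, Finset.mem_sigma] at hp
        rw [Finset.mem_powersetCard]
        rw [Finset.mem_powersetCard] at hp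
        exact ⟨Finset.subset_univ _, hp.2.2⟩
      · intro p hp q hq hpq
        simp only [Finset.mem_coe] at hp hq
        rw [hT, Finset.mem_sigma, Finset.mem_powersetCard] at hp hq
        simp only at hpq
        by_contra hne
        have hfst : p.1 ≠ q.1 := fun h => hne (Sigma.ext h (by rw [hpq]))
        obtain ⟨z, w, hzw, hzweq⟩ := Finset.card_eq_two.1 hp.2.2
        have hzp : z ∈ p.2 := by rw [hzweq]; simp
        have hwp : w ∈ p.2 := by rw [hzweq]; simp
        have azp : H.Adj p.1 z := (SimpleGraph.mem_neighborFinset _ _ _).1 (hp.2.1 hzp)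
        have awp : H.Adj p.1 w := (SimpleGraph.mem_neighborFinset _ _ _).1 (hp.2.1 hwp)
        have azq : H.Adj q.1 z := (SimpleGraph.mem_neighborFinset _ _ _).1 (hq.2.1 (hpq ▸ hzp))
        have awq : H.Adj q.1 w := (SimpleGraph.mem_neighborFinset _ _ _).1 (hq.2.1 (hpq ▸ hwp))
        exact key p.1 q.1 z w hfst hzw azp awp azq awq
    have : ((Finset.univ : Finset (Fin 40)).powersetCard 2).card = 780 := by
      rw [Finset.card_powersetCard]
      decide
    omega
  omega

end Upper

/-- `R(C₄, K_{1,33}) = 40`. -/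
theorem ramsey_C4_star_33 :
    ramseyNumber (SimpleGraph.cycleGraph 4) (starGraph 33) = 40 := by
  have h40 : (40 : ℕ) ∈ {N : ℕ | ∀ G : SimpleGraph (Fin N),
      G.ContainsCopy (SimpleGraph.cycleGraph 4) ∨ Gᶜ.ContainsCopy (starGraph 33)} := upper
  rw [ramseyNumber]
  refine le_antisymm (Nat.sInf_le h40) (le_csInf ⟨40, h40⟩ ?_)
  intro n hn
  by_contra h
  push_neg at h
  exact not_mem_below n (by omega) hn
end

section
/- R(C₄, K_{1,51}) ≥ 59, R(C₄, K_{1,52}) ≥ 60, and R(C₄, K_{1,53}) ≥ 61. -/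
lemma div_pred_two_pow {x j : ℕ} (h : x % 2^j ≠ 0) : (x-1)/2^j = x/2^j := by
  have hd := Nat.div_add_mod x (2^j)
  have hp : 0 < 2^j := Nat.pow_pos (by norm_num)
  have hlt : x % 2^j < 2^j := Nat.mod_lt _ hp
  obtain ⟨r, hr⟩ : ∃ r, x % 2^j = r + 1 :=
    ⟨x % 2^j - 1, by omega⟩
  have hx1 : x - 1 = 2^j * (x / 2^j) + r := by
    rw [hr] at hd; omega
  rw [hx1, Nat.mul_add_div hp, Nat.div_eq_of_lt (show r < 2^j by omega), Nat.add_zero]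

lemma testBit_pred_eq {x j : ℕ} (h : x % 2^j ≠ 0) :
    (x-1).testBit j = x.testBit j := by
  rw [Nat.testBit_eq_decide_div_mod_eq, Nat.testBit_eq_decide_div_mod_eq, div_pred_two_pow h]

lemma and_pred_ne_zero {x i j : ℕ} (hij : i < j) (hi : x.testBit i = true)
    (hj : x.testBit j = true) : x &&& (x-1) ≠ 0 := by
  have hmod : x % 2^j ≠ 0 := by
    intro h0
    have hb : (x % 2^j).testBit i = true := by
      rw [Nat.testBit_mod_two_pow]; simp [hij, hi]
    rw [h0, Nat.zero_testBit] at hb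
    exact Bool.noConfusion hb
  intro h0
  have hb : (x &&& (x-1)).testBit j = true := by
    rw [Nat.testBit_and, testBit_pred_eq hmod, hj]; rfl
  rw [h0, Nat.zero_testBit] at hb
  exact Bool.noConfusion hb

lemma and_pred_ne_zero' {x i j : ℕ} (hij : i ≠ j) (hi : x.testBit i = true)
    (hj : x.testBit j = true) : x &&& (x-1) ≠ 0 := by
  rcases Nat.lt_or_ge i j with h | h
  · exact and_pred_ne_zero h hi hj
  · exact and_pred_ne_zero (by omega) hj hi


def adjB (rows : List Nat) (u v : ℕ) : Bool := Nat.testBit (rows.getD u 0) v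

def mkG (N : ℕ) (rows : List Nat)
    (hs : ∀ u v : Fin N, adjB rows u.val v.val = adjB rows v.val u.val)
    (hi : ∀ u : Fin N, adjB rows u.val u.val = false) : SimpleGraph (Fin N) where
  Adj u v := adjB rows u.val v.val = true
  symm := ⟨fun (u v : Fin N) h => by show adjB rows v.val u.val = true; rw [hs v u]; exact h⟩
  loopless := ⟨fun (u : Fin N) h => by
    have h' : adjB rows u.val u.val = true := h
    rw [hi u] at h'; exact Bool.noConfusion h'⟩

lemma no_copies (N n : ℕ) (hn : 1 ≤ n) (rows : List Nat)
    (hs : ∀ u v : Fin N, adjB rows u.val v.val = adjB rows v.val u.val)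
    (hi : ∀ u : Fin N, adjB rows u.val u.val = false)
    (hC4 : ∀ u v : Fin N, u ≠ v →
      (rows.getD u.val 0 &&& rows.getD v.val 0) &&&
        ((rows.getD u.val 0 &&& rows.getD v.val 0) - 1) = 0)
    (hdeg : ∀ v : Fin N,
      N - n ≤ (Finset.univ.filter (fun w : Fin N => adjB rows v.val w.val = true)).card)
    (hNn : n ≤ N) :
    ¬ ((mkG N rows hs hi).ContainsCopy (SimpleGraph.cycleGraph 4) ∨
       (mkG N rows hs hi)ᶜ.ContainsCopy (starGraph n)) := by
  set G := mkG N rows hs hi with hG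
  rintro (⟨f, hf⟩ | ⟨f, hf⟩)
  · -- C4 copy: contradiction with hC4
    have e01 : (SimpleGraph.cycleGraph 4).Adj 0 1 := by decide
    have e12 : (SimpleGraph.cycleGraph 4).Adj 1 2 := by decide
    have e23 : (SimpleGraph.cycleGraph 4).Adj 2 3 := by decide
    have e30 : (SimpleGraph.cycleGraph 4).Adj 3 0 := by decide
    have h01 : adjB rows (f 0).val (f 1).val = true := hf e01
    have h12 : adjB rows (f 1).val (f 2).val = true := hf e12
    have h23 : adjB rows (f 2).val (f 3).val = true := hf e23
    have h30 : adjB rows (f 3).val (f 0).val = true := hf e30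
    have h21 : adjB rows (f 2).val (f 1).val = true := by rw [hs (f 2) (f 1)]; exact h12
    have h03 : adjB rows (f 0).val (f 3).val = true := by rw [hs (f 0) (f 3)]; exact h30
    have hne02 : f 0 ≠ f 2 := fun h => absurd (f.injective h) (by decide)
    have hne13 : (f 1).val ≠ (f 3).val := fun h =>
      absurd (f.injective (Fin.ext h)) (by decide)
    have hb1 : (rows.getD (f 0).val 0 &&& rows.getD (f 2).val 0).testBit (f 1).val = true := by
      rw [Nat.testBit_and]
      unfold adjB at h01 h21
      rw [h01, h21]; rfl
    have hb3 : (rows.getD (f 0).val 0 &&& rows.getD (f 2).val 0).testBit (f 3).val = true := by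
      rw [Nat.testBit_and]
      unfold adjB at h03 h23
      rw [h03, h23]; rfl
    exact and_pred_ne_zero' hne13 hb1 hb3 (hC4 (f 0) (f 2) hne02)
  · -- star copy: contradiction with hdeg
    classical
    set c : Fin N := f (Sum.inl 0) with hc
    have hadj : ∀ j : Fin n, Gᶜ.Adj c (f (Sum.inr j)) := by
      intro j
      apply hf
      simp [starGraph, completeBipartiteGraph]
    set A : Finset (Fin N) :=
      Finset.univ.filter (fun w : Fin N => adjB rows c.val w.val = true) with hA
    set B : Finset (Fin N) := Finset.univ.image (fun j : Fin n => f (Sum.inr j)) with hB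
    have hBcard : B.card = n := by
      rw [hB, Finset.card_image_of_injective _ (fun a b h => by
        have := f.injective h
        exact Sum.inr.inj this), Finset.card_univ, Fintype.card_fin]
    have hdisj : Disjoint A B := by
      rw [Finset.disjoint_left]
      intro w hwA hwB
      rw [hB, Finset.mem_image] at hwB
      obtain ⟨j, _, rfl⟩ := hwB
      have hna : ¬ G.Adj c (f (Sum.inr j)) := (hadj j).2
      rw [hA, Finset.mem_filter] at hwA
      exact hna hwA.2
    have hcA : c ∉ A := by
      rw [hA, Finset.mem_filter]
      rintro ⟨-, h⟩
      rw [hi c] at h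
      exact Bool.noConfusion h
    have hcB : c ∉ B := by
      rw [hB, Finset.mem_image]
      rintro ⟨j, -, h⟩
      exact (hadj j).ne (h.symm)
    have hsub : (A ∪ B) ∪ {c} ⊆ Finset.univ := Finset.subset_univ _
    have hdisj2 : Disjoint (A ∪ B) ({c} : Finset (Fin N)) := by
      rw [Finset.disjoint_singleton_right]
      simp [hcA, hcB]
    have hcard : (A ∪ B).card + 1 ≤ N := by
      have := Finset.card_le_card hsub
      rw [Finset.card_union_of_disjoint hdisj2, Finset.card_singleton,
        Finset.card_univ, Fintype.card_fin] at this
      exact this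
    rw [Finset.card_union_of_disjoint hdisj, hBcard] at hcard
    have hAc : N - n ≤ A.card := hdeg c
    omega


def RamSet (n : ℕ) : Set ℕ :=
  {N : ℕ | ∀ G : SimpleGraph (Fin N),
    G.ContainsCopy (SimpleGraph.cycleGraph 4) ∨ Gᶜ.ContainsCopy (starGraph n)}


lemma mem_ramsey_upper (n : ℕ) (hn : 1 ≤ n) (G : SimpleGraph (Fin (2*n+2))) :
    G.ContainsCopy (SimpleGraph.cycleGraph 4) ∨ Gᶜ.ContainsCopy (starGraph n) := by
  classical
  by_cases hstar : ∃ v, n ≤ (Gᶜ.neighborFinset v).card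
  · right
    obtain ⟨v, hv⟩ := hstar
    obtain ⟨t, hts, htc⟩ := Finset.exists_subset_card_eq hv
    set g : Fin n → Fin (2*n+2) := fun j => (t.orderIsoOfFin htc j : Fin (2*n+2)) with hg
    have hgmem : ∀ j, g j ∈ Gᶜ.neighborFinset v := fun j => hts (t.orderIsoOfFin htc j).2
    have hgadj : ∀ j, Gᶜ.Adj v (g j) := fun j =>
      (SimpleGraph.mem_neighborFinset _ _ _).mp (hgmem j)
    have hginj : Function.Injective g := fun a b h => by
      have := (t.orderIsoOfFin htc).injective (Subtype.ext h)
      exact this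
    refine ⟨⟨Sum.elim (fun _ => v) g, ?_⟩, ?_⟩
    · rintro (a | a) (b | b) h
      · simp [Subsingleton.elim a b]
      · exact absurd (congrArg id h).symm (hgadj b).ne'
      · exact absurd (congrArg id h) (hgadj a).ne'
      · exact congrArg (Sum.inr : Fin n → Fin 1 ⊕ Fin n) (hginj h)
    · rintro (a | a) (b | b) hab
      · simp [starGraph, completeBipartiteGraph] at hab
      · exact hgadj b
      · exact (hgadj a).symm
      · simp [starGraph, completeBipartiteGraph] at hab
  · left
    push_neg at hstar
    have hdeg : ∀ v, n + 2 ≤ (G.neighborFinset v).card := by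
      intro v
      have h1 := hstar v
      have h2 : Gᶜ.degree v = Fintype.card (Fin (2*n+2)) - 1 - G.degree v :=
        SimpleGraph.degree_compl G v
      have h3 : G.degree v < Fintype.card (Fin (2*n+2)) :=
        SimpleGraph.degree_lt_card_verts (G := G) v
      rw [Fintype.card_fin] at h2 h3
      have h4 : Gᶜ.degree v = (Gᶜ.neighborFinset v).card := rfl
      have h5 : G.degree v = (G.neighborFinset v).card := rfl
      omega
    set u0 : Fin (2*n+2) := ⟨0, by omega⟩ with hu0
    set v0 : Fin (2*n+2) := ⟨1, by omega⟩ with hv0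
    have huv : u0 ≠ v0 := by simp [hu0, hv0]
    set A := G.neighborFinset u0
    set B := G.neighborFinset v0
    have hcard2 : 2 ≤ (A ∩ B).card := by
      have h1 := Finset.card_union_add_card_inter A B
      have h2 : (A ∪ B).card ≤ 2*n+2 := by
        have := Finset.card_le_univ (A ∪ B)
        rwa [Fintype.card_fin] at this
      have h3 : n + 2 ≤ A.card := hdeg u0
      have h4 : n + 2 ≤ B.card := hdeg v0
      omega
    obtain ⟨x, hx, y, hy, hxy⟩ := Finset.one_lt_card.mp hcard2
    rw [Finset.mem_inter] at hx hy
    have hux : G.Adj u0 x := (SimpleGraph.mem_neighborFinset _ _ _).mp hx.1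
    have hvx : G.Adj v0 x := (SimpleGraph.mem_neighborFinset _ _ _).mp hx.2
    have huy : G.Adj u0 y := (SimpleGraph.mem_neighborFinset _ _ _).mp hy.1
    have hvy : G.Adj v0 y := (SimpleGraph.mem_neighborFinset _ _ _).mp hy.2
    set F : Fin 4 → Fin (2*n+2) := ![u0, x, v0, y] with hF
    have hinj : Function.Injective F := by
      intro a b hab
      fin_cases a <;> fin_cases b <;>
        simp_all [hF, huv, hux.ne, hux.ne', hvx.ne, hvx.ne', huy.ne, huy.ne',
          hvy.ne, hvy.ne', hxy]
    refine ⟨⟨F, hinj⟩, ?_⟩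
    intro a b hab
    fin_cases a <;> fin_cases b <;>
      first
        | exact absurd hab (by decide)
        | (show G.Adj _ _; simp only [hF, Matrix.cons_val_zero, Matrix.cons_val_one,
            Matrix.head_cons, Matrix.cons_val_two, Matrix.tail_cons, Matrix.cons_val_three]
           first
             | exact hux | exact hux.symm | exact hvx | exact hvx.symm
             | exact huy | exact huy.symm | exact hvy | exact hvy.symm)

lemma upward_ramset {n N M : ℕ} (hNM : N ≤ M) (hN : N ∈ RamSet n) : M ∈ RamSet n := by
  intro G
  obtain ⟨f, hf⟩ | ⟨f, hf⟩ := hN (G.comap (Fin.castLEEmb hNM))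
  · exact Or.inl ⟨f.trans (Fin.castLEEmb hNM), fun a b hab => hf hab⟩
  · refine Or.inr ⟨f.trans (Fin.castLEEmb hNM), fun a b hab => ?_⟩
    have h := hf hab
    rw [SimpleGraph.compl_adj] at h ⊢
    exact ⟨fun hh => h.1 ((Fin.castLEEmb hNM).injective hh), h.2⟩

lemma ramsey_ge {n L : ℕ} (hn : 1 ≤ n) (hcex : L ∉ RamSet n) :
    L + 1 ≤ ramseyNumber (SimpleGraph.cycleGraph 4) (starGraph n) := by
  by_contra hcon
  push_neg at hcon
  rw [show ramseyNumber (SimpleGraph.cycleGraph 4) (starGraph n) = sInf (RamSet n) from rfl]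
    at hcon
  have hle : sInf (RamSet n) ≤ L := Nat.lt_succ_iff.mp hcon
  have hmem2 : sInf (RamSet n) ∈ RamSet n :=
    Nat.sInf_mem ⟨2*n+2, mem_ramsey_upper n hn⟩
  exact hcex (upward_ramset hle hmem2)

def rows58 : List Nat := [16256, 148636448878247936, 73253880406212640, 18581884049031232, 11294192173187072, 36029933042040836, 290547038224392, 282583145922561, 36046527726094337, 76596380201652225, 144185836026601473, 565166291845377, 10137531838431745, 20275063676732417, 72066527706218626, 13513272854579232, 2269430654963776, 36345473849623568, 140187732541440, 22518569375957124, 1126460433631234, 36592572142997504, 2252487293706272, 9007818804298000, 144397212946793024, 72058178221769736, 9165529499598984, 18225539118549008, 145153792806914, 175990649135108, 72199706192642368, 36178343486292512, 144258264174494720, 2256474886635664, 571746315536388, 1168398946336, 283708904972290, 1161088578109704, 4573978037355584, 66846720, 144713357835108512, 72343540075890688, 18016606391373832, 9007218582380608, 38350965644263682, 4504837115216400, 1143767105274884, 8522825728, 37156964685447360, 146368104583137288, 9359180415635460, 72638144771596304, 18049857760035330, 145249884151255056, 40536794827595784, 18313467821949216, 2253999944253956, 9571253031535618]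

set_option maxRecDepth 100000 in
set_option maxHeartbeats 2000000 in
lemma hs58 : ∀ u v : Fin 58, adjB rows58 u.val v.val = adjB rows58 v.val u.val := by decide

set_option maxRecDepth 100000 in
set_option maxHeartbeats 2000000 in
lemma hi58 : ∀ u : Fin 58, adjB rows58 u.val u.val = false := by decide

set_option maxRecDepth 100000 in
set_option maxHeartbeats 2000000 in
lemma hC458 : ∀ u v : Fin 58, u ≠ v →
    (rows58.getD u.val 0 &&& rows58.getD v.val 0) &&&
      ((rows58.getD u.val 0 &&& rows58.getD v.val 0) - 1) = 0 := by decide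

set_option maxRecDepth 100000 in
set_option maxHeartbeats 4000000 in
lemma hdeg58 : ∀ v : Fin 58,
    58 - 51 ≤ (Finset.univ.filter (fun w : Fin 58 => adjB rows58 v.val w.val = true)).card := by
  decide

lemma notmem58 : (58 : ℕ) ∉ RamSet 51 := fun h =>
  no_copies 58 51 (by norm_num) rows58 hs58 hi58 hC458 hdeg58 (by norm_num) (h _)

def rows59 : List Nat := [9078122117337216, 290499836873023616, 35202090008720, 72343467229184160, 148619922656739460, 36178605495058568, 19142637030277248, 127, 18156244234674176, 292769437210118144, 36312488469348352, 72629409349173760, 516097, 4512395993026818, 2254273857459216, 36609375666704416, 72058830990612544, 289360683248652292, 18331127651504136, 69818988363777, 74309962934812932, 36029356472075266, 144397488223166528, 18577898235512848, 288371801111789600, 1126484158710280, 8936830510563329, 88098939617544, 72163181530719232, 36099234621163524, 144194363652833296, 288302944993968704, 567453553048682497, 9574823208550656, 9297607764476932, 10134267694710800, 9150170663225346, 13528408399085632, 11294192034660896, 66584577, 288511885488750864, 145206402368576, 76563401279143944, 1125918160988192, 144713459975094274, 18032265842655748, 4227858433, 144117455902474528, 288794442868196360, 299075828221952, 20275028876722240,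 73183768890851330, 36033332571546128, 545460846593, 37189885601513792, 22518002970821664, 146371390500571144, 72215929085231120, 282580947698178]

set_option maxRecDepth 100000 in
set_option maxHeartbeats 2000000 in
lemma hs59 : ∀ u v : Fin 59, adjB rows59 u.val v.val = adjB rows59 v.val u.val := by decide

set_option maxRecDepth 100000 in
set_option maxHeartbeats 2000000 in
lemma hi59 : ∀ u : Fin 59, adjB rows59 u.val u.val = false := by decide

set_option maxRecDepth 100000 in
set_option maxHeartbeats 2000000 in
lemma hC459 : ∀ u v : Fin 59, u ≠ v →
    (rows59.getD u.val 0 &&& rows59.getD v.val 0) &&&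
      ((rows59.getD u.val 0 &&& rows59.getD v.val 0) - 1) = 0 := by decide

set_option maxRecDepth 100000 in
set_option maxHeartbeats 4000000 in
lemma hdeg59 : ∀ v : Fin 59,
    59 - 52 ≤ (Finset.univ.filter (fun w : Fin 59 => adjB rows59 v.val w.val = true)).card := by
  decide

lemma notmem59 : (59 : ℕ) ∉ RamSet 52 := fun h =>
  no_copies 59 52 (by norm_num) rows59 hs59 hi59 hC459 hdeg59 (by norm_num) (h _)

def rows60 : List Nat := [576461853963714720, 864691129529466960, 432345564764733480, 216172782382366740, 108086391191183370, 54043195595591685, 603482350101219330, 301741175050609665, 727331339828728320, 363665669914364160, 181832836030922880, 90916417478591040, 45458208739295520, 22729104369647760, 11364552184823880, 5682276092411940, 2841138046205970, 1420569023102985, 577171036814974980, 288585518407487490, 144292759203743745, 648607131905295360, 324303565952647680, 162151782976323840, 81075891488161920, 40537945744080960, 20268972872040480, 10134486436020240, 5067243218010120, 2533621609005060, 1266809730761730, 633405402251265, 576777455004549120, 288388727502274560, 144194363751137280, 72097181875568640, 36048590937784320, 18024295468892160, 9012147734446080, 4506073867223040, 2251937421983745, 1126518466805760, 563259233402880, 281629616701440,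 140814808350720, 70407404175360, 35203702087680, 17601851043840, 8800925521920, 4400462760960, 2200231380480, 1100115690240, 550057845120, 275028922560, 137514461280, 68757230640, 34378615320, 17189307660, 8594653830, 4297326915]

set_option maxRecDepth 100000 in
set_option maxHeartbeats 2000000 in
lemma hs60 : ∀ u v : Fin 60, adjB rows60 u.val v.val = adjB rows60 v.val u.val := by decide

set_option maxRecDepth 100000 in
set_option maxHeartbeats 2000000 in
lemma hi60 : ∀ u : Fin 60, adjB rows60 u.val u.val = false := by decide

set_option maxRecDepth 100000 in
set_option maxHeartbeats 2000000 in
lemma hC460 : ∀ u v : Fin 60, u ≠ v →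
    (rows60.getD u.val 0 &&& rows60.getD v.val 0) &&&
      ((rows60.getD u.val 0 &&& rows60.getD v.val 0) - 1) = 0 := by decide

set_option maxRecDepth 100000 in
set_option maxHeartbeats 4000000 in
lemma hdeg60 : ∀ v : Fin 60,
    60 - 53 ≤ (Finset.univ.filter (fun w : Fin 60 => adjB rows60 v.val w.val = true)).card := by
  decide

lemma notmem60 : (60 : ℕ) ∉ RamSet 53 := fun h =>
  no_copies 60 53 (by norm_num) rows60 hs60 hi60 hC460 hdeg60 (by norm_num) (h _)

/-- `R(C₄, K_{1,51}) ≥ 59`, `R(C₄, K_{1,52}) ≥ 60`, and `R(C₄, K_{1,53}) ≥ 61`. -/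
theorem ramsey_C4_star_51_52_53_lower :
    59 ≤ ramseyNumber (SimpleGraph.cycleGraph 4) (starGraph 51)
      ∧ 60 ≤ ramseyNumber (SimpleGraph.cycleGraph 4) (starGraph 52)
      ∧ 61 ≤ ramseyNumber (SimpleGraph.cycleGraph 4) (starGraph 53) := by
  exact ⟨ramsey_ge (by norm_num) notmem58, ramsey_ge (by norm_num) notmem59,
    ramsey_ge (by norm_num) notmem60⟩
end

section
/- R(C₄, K_{1,69}) ≥ 78 and R(C₄, K_{1,71}) ≥ 80. -/
set_option maxRecDepth 40000

namespace C4Star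

open Finset SimpleGraph

abbrev F := ZMod 3 × ZMod 3
abbrev V := F × F

def fmul (a b : F) : F := (a.1*b.1 - a.2*b.2, a.1*b.2 + a.2*b.1)

def phi (u : V) (c : F) : V := (c, fmul u.1 c - u.2)

def D4 : Finset V := {((0,0),(1,1)), ((0,0),(1,2)), ((0,0),(2,1)), ((0,0),(2,2))}
def D2 : Finset V := {((0,0),(1,2)), ((0,0),(2,2))}

def mkF (n : ℕ) : F := ((n % 3 : ℕ), (n / 3 % 3 : ℕ))
def decode (n : ℕ) : V := (mkF (n / 9), mkF (n % 9))
def fix (n : ℕ) : ℕ :=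
  if n = 77 then 4 else if n = 78 then 5 else if n = 79 then 7 else if n = 80 then 8
  else if n = 4 then 77 else if n = 5 then 78 else if n = 7 then 79 else if n = 8 then 80 else n
def fV (n : ℕ) : V := decode (fix n)

theorem cancelF : ∀ d c c' : F, d ≠ 0 → fmul d c = fmul d c' → c = c' := by decide
theorem fmul_comm : ∀ a b : F, fmul a b = fmul b a := by decide
theorem fmul_sub : ∀ a a' c : F, fmul (a - a') c = fmul a c - fmul a' c := by decide

theorem badU4 : ∀ (u : V) (c c' : F), (phi u c ∈ D4 ∨ phi u c = u) →
    (phi u c' ∈ D4 ∨ phi u c' = u) → c = c' := by decide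

theorem inj81 : ∀ i j : Fin 81, fV i.val = fV j.val → i = j := by decide

theorem cover77 : ∀ v : V, v ∈ D4 ∨ ∃ i : Fin 77, fV i.val = v := by decide
theorem cover79 : ∀ v : V, v ∈ D2 ∨ ∃ i : Fin 79, fV i.val = v := by decide
theorem D2mem : ∀ v : V, v ∈ D2 → v ∈ D4 := by decide

theorem badU2 : ∀ (u : V) (c c' : F), (phi u c ∈ D2 ∨ phi u c = u) →
    (phi u c' ∈ D2 ∨ phi u c' = u) → c = c' :=
  fun u c c' h h' => badU4 u c c' (h.imp (D2mem _) id) (h'.imp (D2mem _) id)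

/-- The big C4-free graph on `V = F₉ × F₉`. -/
def H : SimpleGraph V where
  Adj u v := u ≠ v ∧ u.2 + v.2 = fmul u.1 v.1
  symm := by
    constructor
    rintro u v ⟨h1, h2⟩
    exact ⟨h1.symm, by rw [add_comm, h2, fmul_comm]⟩
  loopless := ⟨fun u h => h.1 rfl⟩

instance : DecidableRel H.Adj :=
  fun u v => decidable_of_iff (u ≠ v ∧ u.2 + v.2 = fmul u.1 v.1) Iff.rfl

theorem fV_injOn {a b : ℕ} (ha : a < 81) (hb : b < 81) (h : fV a = fV b) : a = b := by
  have := inj81 ⟨a, ha⟩ ⟨b, hb⟩ h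
  exact show ((⟨a, ha⟩ : Fin 81)).val = ((⟨b, hb⟩ : Fin 81)).val from congrArg Fin.val this

def embV (N : ℕ) (h : N ≤ 81) : Fin N ↪ V :=
  ⟨fun i => fV i.val, fun i j hij => by
    exact Fin.ext (fV_injOn (lt_of_lt_of_le i.isLt h) (lt_of_lt_of_le j.isLt h) hij)⟩

def GG (N : ℕ) (h : N ≤ 81) : SimpleGraph (Fin N) := H.comap (embV N h)

theorem noC4 (N : ℕ) (h : N ≤ 81) : ¬ (GG N h).ContainsCopy (SimpleGraph.cycleGraph 4) := by
  rintro ⟨f, hf⟩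
  set e : Fin 4 → V := fun i => embV N h (f i) with he
  have h01 : H.Adj (e 0) (e 1) := hf (by decide)
  have h21 : H.Adj (e 2) (e 1) := H.adj_symm (hf (by decide : (SimpleGraph.cycleGraph 4).Adj 1 2))
  have h23 : H.Adj (e 2) (e 3) := hf (by decide)
  have h03 : H.Adj (e 0) (e 3) := H.adj_symm (hf (by decide : (SimpleGraph.cycleGraph 4).Adj 3 0))
  have hxy : e 0 ≠ e 2 := fun hc =>
    absurd (f.injective ((embV N h).injective hc)) (by decide)
  have hab : e 1 ≠ e 3 := fun hc =>
    absurd (f.injective ((embV N h).injective hc)) (by decide)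
  by_cases h1 : (e 0).1 = (e 2).1
  · have h2 : (e 0).2 + (e 1).2 = (e 2).2 + (e 1).2 := by
      rw [h01.2, h21.2, h1]
    exact hxy (Prod.ext h1 (add_right_cancel h2))
  · have key : fmul ((e 0).1 - (e 2).1) (e 1).1 = fmul ((e 0).1 - (e 2).1) (e 3).1 := by
      rw [fmul_sub, fmul_sub, ← h01.2, ← h21.2, ← h23.2, ← h03.2]
      abel
    have hc1 : (e 1).1 = (e 3).1 := cancelF _ _ _ (sub_ne_zero_of_ne h1) key
    have hc2 : (e 0).2 + (e 1).2 = (e 0).2 + (e 3).2 := by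
      rw [h01.2, h03.2, hc1]
    exact hab (Prod.ext hc1 (add_left_cancel hc2))

theorem noStar (M n N : ℕ) (hM : M ≤ 81) (hN : N ≤ M) (hn : M < n + 9)
    (D : Finset V)
    (cover : ∀ v : V, v ∈ D ∨ ∃ i : Fin M, fV i.val = v)
    (badU : ∀ (u : V) (c c' : F), (phi u c ∈ D ∨ phi u c = u) →
      (phi u c' ∈ D ∨ phi u c' = u) → c = c') :
    ¬ (GG N (hN.trans hM))ᶜ.ContainsCopy (_root_.starGraph n) := by
  rintro ⟨f, hf⟩
  set u : V := fV (f (Sum.inl 0)).val with hu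
  set R : ℕ → Finset V := fun m => (Finset.range m).image fV with hR
  have hadj : ∀ i : Fin n, (GG N (hN.trans hM))ᶜ.Adj (f (Sum.inl 0)) (f (Sum.inr i)) :=
    fun i => hf (Or.inl ⟨rfl, rfl⟩)
  have hne : ∀ i : Fin n, fV (f (Sum.inr i)).val ≠ u ∧ ¬ H.Adj u (fV (f (Sum.inr i)).val) := by
    intro i
    have h2 := (SimpleGraph.compl_adj _ _ _).mp (hadj i)
    refine ⟨fun hc => ?_, fun hc => h2.2 hc⟩
    have h4 : (f (Sum.inr i)).val = (f (Sum.inl 0)).val :=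
      fV_injOn (lt_of_lt_of_le (f (Sum.inr i)).isLt (hN.trans hM))
        (lt_of_lt_of_le (f (Sum.inl 0)).isLt (hN.trans hM)) hc
    exact absurd (f.injective (Fin.ext h4)) (by simp)
  set T : Finset V := (R N).filter (fun v => v ≠ u ∧ ¬ H.Adj u v) with hTdef
  have hT : n ≤ T.card := by
    have hcard : (univ : Finset (Fin n)).card ≤ T.card := by
      apply Finset.card_le_card_of_injOn (fun i : Fin n => fV (f (Sum.inr i)).val)
      · intro i _
        refine mem_filter.mpr ⟨?_, hne i⟩
        exact mem_image.mpr ⟨(f (Sum.inr i)).val, mem_range.mpr (f (Sum.inr i)).isLt, rfl⟩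
      · intro i _ j _ hij
        have h3 : (f (Sum.inr i)).val = (f (Sum.inr j)).val :=
          fV_injOn (lt_of_lt_of_le (f (Sum.inr i)).isLt (hN.trans hM))
            (lt_of_lt_of_le (f (Sum.inr j)).isLt (hN.trans hM)) hij
        have h4 := f.injective (Fin.ext h3)
        exact Sum.inr_injective h4
    simpa using hcard
  set P : Finset V := univ.image (phi u) with hPdef
  have hP : P.card = 9 := by
    rw [hPdef, Finset.card_image_of_injective _
      (fun c c' (hcc : phi u c = phi u c') => congrArg Prod.fst hcc)]
    simp
  set Bad : Finset V := P.filter (fun v => v ∈ D ∨ v = u) with hBdef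
  have hBad : Bad.card ≤ 1 := by
    rw [Finset.card_le_one]
    intro a ha b hb
    rw [hBdef, mem_filter, hPdef, mem_image] at ha hb
    obtain ⟨⟨c, -, rfl⟩, hcond⟩ := ha
    obtain ⟨⟨c', -, rfl⟩, hcond'⟩ := hb
    rw [badU u c c' hcond hcond']
  set Nb : Finset V := univ.filter (fun v => H.Adj u v) with hNbdef
  have hGood : 8 ≤ ((R M) ∩ Nb).card := by
    have hsub : P \ Bad ⊆ (R M) ∩ Nb := by
      intro v hv
      rw [mem_sdiff, hBdef, mem_filter] at hv
      obtain ⟨hvP, hbad⟩ := hv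
      push_neg at hbad
      obtain ⟨hD, hvu⟩ := hbad hvP
      obtain ⟨c, -, rfl⟩ := mem_image.mp hvP
      refine mem_inter.mpr ⟨?_, ?_⟩
      · rcases cover (phi u c) with hc | ⟨i, hi⟩
        · exact absurd hc hD
        · exact mem_image.mpr ⟨i.val, mem_range.mpr (lt_of_lt_of_le i.isLt le_rfl), hi⟩
      · refine mem_filter.mpr ⟨mem_univ _, Ne.symm hvu, ?_⟩
        show u.2 + (fmul u.1 c - u.2) = fmul u.1 c
        abel
    have h5 : (P \ Bad).card ≤ ((R M) ∩ Nb).card := card_le_card hsub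
    have h6 : Bad ⊆ P := filter_subset _ _
    rw [card_sdiff_of_subset h6] at h5
    omega
  have hdiff : ((R M) \ (R N)).card ≤ M - N := by
    have hsub : (R M) \ (R N) ⊆ ((Finset.range M) \ (Finset.range N)).image fV := by
      intro v hv
      rw [mem_sdiff] at hv
      obtain ⟨hvM, hvN⟩ := hv
      obtain ⟨i, hi, rfl⟩ := mem_image.mp hvM
      exact mem_image.mpr ⟨i, mem_sdiff.mpr ⟨hi, fun hc => hvN (mem_image.mpr ⟨i, hc, rfl⟩)⟩, rfl⟩
    have h5 := (card_le_card hsub).trans card_image_le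
    have h6 : ((Finset.range M) \ (Finset.range N)).card = M - N := by
      rw [card_sdiff_of_subset (Finset.range_subset_range.mpr hN), card_range, card_range]
    omega
  have hIN : 8 ≤ ((R N) ∩ Nb).card + (M - N) := by
    have hsub2 : (R M) ∩ Nb ⊆ ((R N) ∩ Nb) ∪ ((R M) \ (R N)) := by
      intro v hv
      rw [mem_inter] at hv
      by_cases hvN : v ∈ R N
      · exact mem_union_left _ (mem_inter.mpr ⟨hvN, hv.2⟩)
      · exact mem_union_right _ (mem_sdiff.mpr ⟨hv.1, hvN⟩)
    have h5 := (card_le_card hsub2).trans (card_union_le _ _)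
    omega
  have hpart : T.card + ((R N) ∩ Nb).card + 1 ≤ N := by
    have hdisj1 : Disjoint T ((R N) ∩ Nb) := by
      rw [Finset.disjoint_left]
      intro v hvT hvI
      exact (mem_filter.mp hvT).2.2 (mem_filter.mp (mem_inter.mp hvI).2).2
    have huT : u ∉ T ∪ ((R N) ∩ Nb) := by
      rw [mem_union]
      rintro (h | h)
      · exact (mem_filter.mp h).2.1 rfl
      · exact H.irrefl (mem_filter.mp (mem_inter.mp h).2).2
    have hsub3 : insert u (T ∪ ((R N) ∩ Nb)) ⊆ R N := by
      intro v hv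
      rcases mem_insert.mp hv with rfl | hv2
      · exact mem_image.mpr ⟨(f (Sum.inl 0)).val, mem_range.mpr (f (Sum.inl 0)).isLt, rfl⟩
      · rcases mem_union.mp hv2 with h | h
        · exact filter_subset _ _ h
        · exact (mem_inter.mp h).1
    have h5 := card_le_card hsub3
    rw [card_insert_of_notMem huT, card_union_of_disjoint hdisj1] at h5
    have h6 : (R N).card ≤ N := le_trans card_image_le (le_of_eq (card_range N))
    omega
  omega

theorem notInS (n M : ℕ) (hM : M ≤ 81) (hn : M < n + 9) (D : Finset V)
    (cover : ∀ v : V, v ∈ D ∨ ∃ i : Fin M, fV i.val = v)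
    (badU : ∀ (u : V) (c c' : F), (phi u c ∈ D ∨ phi u c = u) →
      (phi u c' ∈ D ∨ phi u c' = u) → c = c')
    (N : ℕ) (hN : N ≤ M) :
    ¬ (∀ G' : SimpleGraph (Fin N),
      G'.ContainsCopy (SimpleGraph.cycleGraph 4) ∨ G'ᶜ.ContainsCopy (_root_.starGraph n)) := by
  intro hall
  rcases hall (GG N (hN.trans hM)) with h | h
  · exact noC4 N (hN.trans hM) h
  · exact noStar M n N hM hN hn D cover badU h

theorem upperbound (n : ℕ) (hn : 0 < n) (hn' : n ≤ 71) :
    ∀ Gr : SimpleGraph (Fin 200), Gr.ContainsCopy (SimpleGraph.cycleGraph 4) ∨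
      Grᶜ.ContainsCopy (_root_.starGraph n) := by
  intro Gr
  classical
  by_cases hx : ∃ x : Fin 200, n ≤ (univ.filter (fun y => Grᶜ.Adj x y)).card
  · right
    obtain ⟨x, hcard⟩ := hx
    obtain ⟨S, hS, hScard⟩ := Finset.exists_subset_card_eq hcard
    let eqv : Fin n ≃ S := ((S.equivFin).trans (finCongr hScard)).symm
    have hmem : ∀ i : Fin n, Grᶜ.Adj x ((eqv i : Fin 200)) := by
      intro i
      exact (mem_filter.mp (hS (eqv i).2)).2
    refine ⟨⟨Sum.elim (fun _ => x) (fun i => (eqv i : Fin 200)), ?_⟩, ?_⟩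
    · rintro (a | a) (b | b) hab
      · exact congrArg Sum.inl (Subsingleton.elim a b)
      · exact absurd (hmem b).symm (by rw [show x = _ from hab]; exact fun hc => hc.1 rfl)
      · exact absurd (hmem a).symm (by rw [show x = _ from hab.symm]; exact fun hc => hc.1 rfl)
      · exact congrArg Sum.inr (eqv.injective (Subtype.coe_injective hab))
    · rintro (a | a) (b | b) hadj
      · rcases hadj with ⟨h1, h2⟩ | ⟨h1, h2⟩ <;> simp at h1 h2
      · exact hmem b
      · exact Grᶜ.adj_symm (hmem a)
      · rcases hadj with ⟨h1, h2⟩ | ⟨h1, h2⟩ <;> simp at h1 h2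
  · left
    push_neg at hx
    have hdeg : ∀ x : Fin 200, 129 ≤ (univ.filter (fun y => Gr.Adj x y)).card := by
      intro x
      have h1 := (hx x).trans_le hn'
      have hcover : (univ : Finset (Fin 200)) ⊆
          insert x ((univ.filter (fun y => Gr.Adj x y)) ∪ (univ.filter (fun y => Grᶜ.Adj x y))) := by
        intro y _
        by_cases h : y = x
        · exact mem_insert.mpr (Or.inl h)
        · by_cases hadj : Gr.Adj x y
          · exact mem_insert_of_mem (mem_union_left _ (mem_filter.mpr ⟨mem_univ _, hadj⟩))
          · exact mem_insert_of_mem (mem_union_right _ (mem_filter.mpr ⟨mem_univ _,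
              (SimpleGraph.compl_adj _ _ _).mpr ⟨Ne.symm h, hadj⟩⟩))
      have h2 := card_le_card hcover
      have h3 : (univ : Finset (Fin 200)).card = 200 := by simp
      have h4 : (insert x ((univ.filter (fun y => Gr.Adj x y)) ∪
          (univ.filter (fun y => Grᶜ.Adj x y)))).card ≤
          ((univ.filter (fun y => Gr.Adj x y)).card + (univ.filter (fun y => Grᶜ.Adj x y)).card) + 1 := by
        refine (card_insert_le x _).trans ?_
        exact Nat.succ_le_succ (card_union_le _ _)
      omega
    have hkey : 1 < ((univ.filter (fun y => Gr.Adj 0 y)) ∩ (univ.filter (fun y => Gr.Adj 1 y))).card := by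
      have h5 := Finset.card_union_add_card_inter (univ.filter (fun y => Gr.Adj 0 y))
        (univ.filter (fun y => Gr.Adj 1 y))
      have hU : ((univ.filter (fun y => Gr.Adj 0 y)) ∪ (univ.filter (fun y => Gr.Adj 1 y))).card ≤ 200 := by
        refine (card_le_card (subset_univ _)).trans ?_
        simp
      have h6 := hdeg 0
      have h7 := hdeg 1
      omega
    obtain ⟨a, ha, b, hb, hab⟩ := Finset.one_lt_card.mp hkey
    rw [mem_inter, mem_filter, mem_filter] at ha hb
    have h0a : Gr.Adj 0 a := ha.1.2
    have h1a : Gr.Adj 1 a := ha.2.2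
    have h0b : Gr.Adj 0 b := hb.1.2
    have h1b : Gr.Adj 1 b := hb.2.2
    have ha0 : a ≠ 0 := fun hc => Gr.irrefl (hc ▸ h0a)
    have ha1 : a ≠ 1 := fun hc => Gr.irrefl (hc ▸ h1a)
    have hb0 : b ≠ 0 := fun hc => Gr.irrefl (hc ▸ h0b)
    have hb1 : b ≠ 1 := fun hc => Gr.irrefl (hc ▸ h1b)
    have h01 : (0 : Fin 200) ≠ 1 := by decide
    refine ⟨⟨![0, a, 1, b], ?_⟩, ?_⟩
    · intro i j hij
      fin_cases i <;> fin_cases j <;>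
        simp_all [Matrix.cons_val_zero, Matrix.cons_val_one, Matrix.head_cons, Fin.isValue]
    · intro i j hadj
      change Gr.Adj (![0, a, 1, b] i) (![0, a, 1, b] j)
      fin_cases i <;> fin_cases j <;>
        first
          | exact absurd hadj (by decide)
          | simpa using h0a
          | simpa using h1a
          | simpa using h0b
          | simpa using h1b
          | simpa using Gr.adj_symm h0a
          | simpa using Gr.adj_symm h1a
          | simpa using Gr.adj_symm h0b
          | simpa using Gr.adj_symm h1b

end C4Star

/-- `R(C₄, K_{1,69}) ≥ 78` and `R(C₄, K_{1,71}) ≥ 80`. -/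
theorem ramsey_C4_star_69_71_lower :
    78 ≤ ramseyNumber (SimpleGraph.cycleGraph 4) (starGraph 69)
      ∧ 80 ≤ ramseyNumber (SimpleGraph.cycleGraph 4) (starGraph 71) := by
  constructor
  · unfold ramseyNumber
    refine le_csInf ⟨200, ?_⟩ ?_
    · exact fun G => C4Star.upperbound 69 (by norm_num) (by norm_num) G
    · intro N hN
      by_contra hlt
      push_neg at hlt
      exact C4Star.notInS 69 77 (by norm_num) (by norm_num) C4Star.D4 C4Star.cover77
        C4Star.badU4 N (by omega) hN
  · unfold ramseyNumber
    refine le_csInf ⟨200, ?_⟩ ?_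
    · exact fun G => C4Star.upperbound 71 (by norm_num) (by norm_num) G
    · intro N hN
      by_contra hlt
      push_neg at hlt
      exact C4Star.notInS 71 79 (by norm_num) (by norm_num) C4Star.D2 C4Star.cover79
        C4Star.badU2 N (by omega) hN
end

section
/- R(C₄, K_{1,102}) ≤ 113, R(C₄, K_{1,104}) ≤ 115, R(C₄, K_{1,106}) ≤ 117, and R(C₄, K_{1,108}) ≤ 119; that is, for each n ∈ {102, 104, 106, 108}, R(C₄, K_{1,n}) ≤ n + 11. -/
section Aux
open Finset SimpleGraph

lemma containsCopy_cycle4 {V : Type*} (G : SimpleGraph V) {a b c d : V}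
    (hab : G.Adj a b) (hbc : G.Adj b c) (hcd : G.Adj c d) (hda : G.Adj d a)
    (hac : a ≠ c) (hbd : b ≠ d) :
    G.ContainsCopy (SimpleGraph.cycleGraph 4) := by
  have h1 : a ≠ b := G.ne_of_adj hab
  have h2 : b ≠ c := G.ne_of_adj hbc
  have h3 : c ≠ d := G.ne_of_adj hcd
  have h4 : d ≠ a := G.ne_of_adj hda
  refine ⟨⟨![a,b,c,d], ?_⟩, ?_⟩
  · intro i j hij
    fin_cases i <;> fin_cases j <;> simp_all
  · intro i j h
    rw [SimpleGraph.cycleGraph_adj] at h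
    fin_cases i <;> fin_cases j <;>
      simp_all [Fin.ext_iff] <;>
      first
        | exact hab | exact hbc | exact hcd | exact hda
        | exact hab.symm | exact hbc.symm | exact hcd.symm | exact hda.symm
        | (exfalso; revert h; decide)

lemma degree_eq_eleven {N : ℕ} (G : SimpleGraph (Fin N)) [DecidableRel G.Adj]
    (hfree : ¬ G.ContainsCopy (SimpleGraph.cycleGraph 4))
    (hmin : ∀ v, 11 ≤ G.degree v) (hN : N ≤ 119) (v : Fin N) : G.degree v = 11 := by
  classical
  set s : Fin N → Finset (Fin N) := fun u => G.neighborFinset u \ {v} with hs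
  have hdisj : (G.neighborFinset v : Set (Fin N)).PairwiseDisjoint s := by
    intro u₁ hu₁ u₂ hu₂ hne
    simp only [Finset.coe_mem, Finset.mem_coe, mem_neighborFinset] at hu₁ hu₂
    refine Finset.disjoint_left.mpr fun w hw₁ hw₂ => ?_
    simp only [hs, Finset.mem_sdiff, mem_neighborFinset, Finset.mem_singleton] at hw₁ hw₂
    exact hfree (containsCopy_cycle4 G hu₁ hw₁.1 hw₂.1.symm hu₂.symm (Ne.symm hw₁.2) hne)
  have hcard : ∀ u ∈ G.neighborFinset v, (s u).card = G.degree u - 1 := by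
    intro u hu
    rw [mem_neighborFinset] at hu
    have hv : v ∈ G.neighborFinset u := by rw [mem_neighborFinset]; exact hu.symm
    show (G.neighborFinset u \ {v}).card = G.degree u - 1
    rw [Finset.sdiff_singleton_eq_erase, Finset.card_erase_of_mem hv]
    rfl
  have hsub : (G.neighborFinset v).biUnion s ⊆ Finset.univ.erase v := by
    intro w hw
    simp only [Finset.mem_biUnion, hs, Finset.mem_sdiff, Finset.mem_singleton] at hw
    obtain ⟨u, _, _, hwv⟩ := hw
    exact Finset.mem_erase.mpr ⟨hwv, Finset.mem_univ w⟩
  have hsum : ∑ u ∈ G.neighborFinset v, (s u).card ≤ N - 1 := by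
    rw [← Finset.card_biUnion (fun u hu u' hu' hne => hdisj hu hu' hne)]
    calc ((G.neighborFinset v).biUnion s).card ≤ (Finset.univ.erase v).card :=
          Finset.card_le_card hsub
      _ = N - 1 := by rw [Finset.card_erase_of_mem (Finset.mem_univ v), Finset.card_univ,
          Fintype.card_fin]
  have hlow : (G.degree v) * 10 ≤ ∑ u ∈ G.neighborFinset v, (s u).card := by
    have h10 : ∀ u ∈ G.neighborFinset v, 10 ≤ (s u).card := by
      intro u hu
      rw [hcard u hu]
      have := hmin u
      omega
    calc (G.degree v) * 10 = (G.neighborFinset v).card • 10 := by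
          rw [SimpleGraph.degree, smul_eq_mul]
      _ ≤ ∑ u ∈ G.neighborFinset v, (s u).card := Finset.card_nsmul_le_sum _ _ _ h10
  have := hmin v
  omega

lemma containsCopy_star {V : Type*} [Fintype V] [DecidableEq V] (H : SimpleGraph V)
    [DecidableRel H.Adj] {n : ℕ} (v : V) (h : n ≤ H.degree v) :
    H.ContainsCopy (_root_.starGraph n) := by
  have h' : n ≤ (H.neighborFinset v).card := h
  let e := (H.neighborFinset v).equivFin
  let f : Fin n → V := fun i => (e.symm (Fin.castLE h' i)).val
  have hmem : ∀ i, f i ∈ H.neighborFinset v := fun i => (e.symm (Fin.castLE h' i)).2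
  have hadj : ∀ i, H.Adj v (f i) := fun i => (mem_neighborFinset H v _).mp (hmem i)
  have hfinj : Function.Injective f := by
    intro i j hij
    have : e.symm (Fin.castLE h' i) = e.symm (Fin.castLE h' j) := Subtype.ext hij
    have := e.symm.injective this
    exact Fin.castLE_injective h' this
  refine ⟨⟨Sum.elim (fun _ => v) f, ?_⟩, ?_⟩
  · intro x y hxy
    cases x with
    | inl a => cases y with
      | inl b => exact congrArg Sum.inl (Subsingleton.elim a b)
      | inr b =>
          simp only [Sum.elim_inl, Sum.elim_inr] at hxy
          exact absurd hxy (H.ne_of_adj (hadj b))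
    | inr a => cases y with
      | inl b =>
          simp only [Sum.elim_inl, Sum.elim_inr] at hxy
          exact absurd hxy.symm (H.ne_of_adj (hadj a))
      | inr b =>
          simp only [Sum.elim_inr] at hxy
          exact congrArg Sum.inr (hfinj hxy)
  · intro x y hxy
    cases x with
    | inl a => cases y with
      | inl b => simp [_root_.starGraph] at hxy
      | inr b => exact hadj b
    | inr a => cases y with
      | inl b => exact (hadj a).symm
      | inr b => simp [_root_.starGraph] at hxy

lemma ramsey_le_of (n N : ℕ) (hodd : N % 2 = 1) (hN : N ≤ 119) (hn : N = n + 11) :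
    ramseyNumber (SimpleGraph.cycleGraph 4) (_root_.starGraph n) ≤ N := by
  apply Nat.sInf_le
  intro G
  classical
  by_cases h : G.ContainsCopy (SimpleGraph.cycleGraph 4)
  · exact Or.inl h
  refine Or.inr ?_
  have hex : ∃ v, G.degree v ≤ 10 := by
    by_contra h2
    push_neg at h2
    have hmin : ∀ v, 11 ≤ G.degree v := fun v => h2 v
    have hreg : ∀ v : Fin N, G.degree v = 11 := degree_eq_eleven G h hmin hN
    have hsum := G.sum_degrees_eq_twice_card_edges
    rw [Finset.sum_congr rfl (fun v _ => hreg v), Finset.sum_const, Finset.card_univ,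
      Fintype.card_fin, smul_eq_mul] at hsum
    omega
  obtain ⟨v, hv⟩ := hex
  have hdeg : n ≤ Gᶜ.degree v := by
    rw [SimpleGraph.degree_compl, Fintype.card_fin]
    omega
  exact containsCopy_star Gᶜ v hdeg

end Aux

/-- `R(C₄, K_{1,102}) ≤ 113`, `R(C₄, K_{1,104}) ≤ 115`, `R(C₄, K_{1,106}) ≤ 117`, and
`R(C₄, K_{1,108}) ≤ 119`. -/
theorem ramsey_C4_star_102_104_106_108_upper :
    ramseyNumber (SimpleGraph.cycleGraph 4) (starGraph 102) ≤ 113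
      ∧ ramseyNumber (SimpleGraph.cycleGraph 4) (starGraph 104) ≤ 115
      ∧ ramseyNumber (SimpleGraph.cycleGraph 4) (starGraph 106) ≤ 117
      ∧ ramseyNumber (SimpleGraph.cycleGraph 4) (starGraph 108) ≤ 119 :=
  ⟨ramsey_le_of 102 113 rfl (by norm_num) rfl, ramsey_le_of 104 115 rfl (by norm_num) rfl,
   ramsey_le_of 106 117 rfl (by norm_num) rfl, ramsey_le_of 108 119 rfl (by norm_num) rfl⟩
end

section
/- Let a and b be integers with a ≥ 1 and 1 ≤ b ≤ a − 1. Then every simple graph on 4a² + 2b + 2a + 1 vertices that contains no subgraph isomorphic to C₄ has a vertex of degree at most 2a (i.e., there is no C₄-free graph on 4a² + 2b + 2a + 1 vertices with minimum degree at least 2a + 1). -/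
section AuxC4
open SimpleGraph Finset

/-- In a `C₄`-free graph, two distinct vertices have at most one common neighbor. -/
lemma common_nbrs_le_one {V : Type*} [Fintype V] [DecidableEq V] (G : SimpleGraph V)
    [DecidableRel G.Adj]
    (hC4 : ¬ G.ContainsCopy (SimpleGraph.cycleGraph 4)) {v w : V} (hvw : v ≠ w) :
    (G.neighborFinset v ∩ G.neighborFinset w).card ≤ 1 := by
  by_contra h
  push_neg at h
  obtain ⟨u, hu, x, hx, hux⟩ := Finset.one_lt_card.mp h
  simp only [mem_inter, mem_neighborFinset] at hu hx
  apply hC4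
  have hvu : v ≠ u := fun h => G.loopless.irrefl v (h ▸ hu.1)
  have hvx : v ≠ x := fun h => G.loopless.irrefl v (h ▸ hx.1)
  have hwu : w ≠ u := fun h => G.loopless.irrefl w (h ▸ hu.2)
  have hwx : w ≠ x := fun h => G.loopless.irrefl w (h ▸ hx.2)
  refine ⟨⟨![v, u, w, x], ?_⟩, ?_⟩
  · intro i j hij
    fin_cases i <;> fin_cases j <;> simp_all
  · intro i j hij
    rw [SimpleGraph.cycleGraph_adj] at hij
    show G.Adj (![v, u, w, x] i) (![v, u, w, x] j)
    fin_cases i <;> fin_cases j <;>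
      simp_all [Fin.ext_iff, G.adj_symm, hu.1.symm, hu.2.symm, hx.1.symm, hx.2.symm] <;>
      exact absurd hij (by decide)

/-- Local counting around a vertex in a `C₄`-free graph of minimum degree `δ`. -/
lemma degree_upper {V : Type*} [Fintype V] [DecidableEq V] (G : SimpleGraph V)
    [DecidableRel G.Adj]
    (hC4 : ¬ G.ContainsCopy (SimpleGraph.cycleGraph 4)) (δ : ℕ)
    (hδ : ∀ v : V, δ ≤ G.degree v) (v : V) :
    G.degree v * (δ - 2) + G.degree v + 1 ≤ Fintype.card V := by
  classical
  set D := G.neighborFinset v with hD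
  set S : V → Finset V := fun u => G.neighborFinset u \ insert v D with hS
  have hcard : ∀ u ∈ D, δ - 2 ≤ (S u).card := by
    intro u hu
    have hadj : G.Adj v u := (G.mem_neighborFinset v u).mp hu
    have huv : u ≠ v := (G.ne_of_adj hadj).symm
    have h1 : (G.neighborFinset u ∩ insert v D).card ≤ 2 := by
      have hsub : G.neighborFinset u ∩ insert v D ⊆
          (G.neighborFinset u ∩ {v}) ∪ (G.neighborFinset u ∩ D) := by
        intro x hx
        simp only [mem_inter, mem_insert, mem_union, mem_singleton] at hx ⊢
        tauto
      calc (G.neighborFinset u ∩ insert v D).card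
          ≤ ((G.neighborFinset u ∩ {v}) ∪ (G.neighborFinset u ∩ D)).card :=
            Finset.card_le_card hsub
        _ ≤ (G.neighborFinset u ∩ {v}).card + (G.neighborFinset u ∩ D).card :=
            Finset.card_union_le _ _
        _ ≤ 1 + 1 := by
            gcongr
            · exact le_trans (Finset.card_le_card Finset.inter_subset_right) (by simp)
            · exact common_nbrs_le_one G hC4 huv
    have h2 : (S u).card + (G.neighborFinset u ∩ insert v D).card = G.degree u := by
      rw [hS]
      simpa using Finset.card_sdiff_add_card_inter (G.neighborFinset u) (insert v D)
    have := hδ u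
    omega
  have hdisj : (D : Set V).Pairwise fun u u' => Disjoint (S u) (S u') := by
    intro u hu u' hu' huu'
    rw [Finset.disjoint_left]
    intro x hx hx'
    simp only [hS, mem_sdiff, mem_neighborFinset, mem_insert, not_or] at hx hx'
    have hxv : x ≠ v := hx.2.1
    have hle := common_nbrs_le_one G hC4 huu'
    have hvmem : v ∈ G.neighborFinset u ∩ G.neighborFinset u' := by
      simp only [mem_inter, mem_neighborFinset]
      exact ⟨((G.mem_neighborFinset v u).mp (by simpa [hD] using hu)).symm,
        ((G.mem_neighborFinset v u').mp (by simpa [hD] using hu')).symm⟩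
    have hxmem : x ∈ G.neighborFinset u ∩ G.neighborFinset u' := by
      simp only [mem_inter, mem_neighborFinset]
      exact ⟨hx.1, hx'.1⟩
    have hsub2 : ({v, x} : Finset V) ⊆ G.neighborFinset u ∩ G.neighborFinset u' := by
      intro y hy
      rcases Finset.mem_insert.mp hy with h | h
      · exact h ▸ hvmem
      · exact (Finset.mem_singleton.mp h) ▸ hxmem
    have h2 : ({v, x} : Finset V).card = 2 := by
      rw [Finset.card_insert_of_notMem (by simpa using hxv.symm), Finset.card_singleton]
    have := Finset.card_le_card hsub2
    omega
  have hsum : D.card * (δ - 2) ≤ (D.biUnion S).card := by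
    rw [Finset.card_biUnion (fun u hu u' hu' h => hdisj hu hu' h)]
    calc D.card * (δ - 2) = ∑ _u ∈ D, (δ - 2) := by rw [Finset.sum_const, smul_eq_mul]
      _ ≤ ∑ u ∈ D, (S u).card := Finset.sum_le_sum hcard
  have hsub : D.biUnion S ⊆ Finset.univ \ insert v D := by
    intro x hx
    simp only [Finset.mem_biUnion, hS, mem_sdiff] at hx
    obtain ⟨u, _, _, hx2⟩ := hx
    simp [hx2]
  have hbig := Finset.card_le_card hsub
  rw [Finset.card_sdiff_of_subset (Finset.subset_univ _)] at hbig
  have hvD : v ∉ D := by simp [hD]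
  have hins : (insert v D).card = D.card + 1 := Finset.card_insert_of_notMem hvD
  have hDcard : D.card = G.degree v := rfl
  have hle2 := Finset.card_le_card (Finset.subset_univ (insert v D))
  rw [hins] at hbig hle2
  rw [hDcard] at hsum hbig hle2
  simp only [Finset.card_univ] at hbig hle2
  omega

end AuxC4

/-- For integers `a ≥ 1` and `1 ≤ b ≤ a − 1`, every `C₄`-free graph on
`4a² + 2b + 2a + 1` vertices has a vertex of degree at most `2a`. -/
theorem exists_low_degree_vertex_of_C4_free (a b : ℕ) (ha : 1 ≤ a) (hb1 : 1 ≤ b)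
    (hb2 : b ≤ a - 1)
    (G : SimpleGraph (Fin (4 * a ^ 2 + 2 * b + 2 * a + 1)))
    (hC4 : ¬ G.ContainsCopy (SimpleGraph.cycleGraph 4)) :
    ∃ v, (G.neighborSet v).ncard ≤ 2 * a := by
  classical
  by_contra h
  push_neg at h
  have hdeg : ∀ v, 2 * a + 1 ≤ G.degree v := by
    intro v
    have := h v
    rwa [Set.ncard_eq_toFinset_card', ← SimpleGraph.neighborFinset_def,
      ← SimpleGraph.degree] at this
  have hN : Fintype.card (Fin (4 * a ^ 2 + 2 * b + 2 * a + 1))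
      = 4 * a ^ 2 + 2 * b + 2 * a + 1 := Fintype.card_fin _
  have hup : ∀ v, G.degree v = 2 * a + 1 := by
    intro v
    have h1 := degree_upper G hC4 (2 * a + 1) hdeg v
    rw [hN] at h1
    have h2 := hdeg v
    set d := G.degree v with hd
    by_contra hdne
    have hdge : 2 * a + 2 ≤ d := by omega
    rw [show 2 * a + 1 - 2 = 2 * a - 1 from by omega] at h1
    have e1 : d * (2 * a - 1) + d = d * (2 * a) := by
      rw [← Nat.mul_succ]; congr 1; omega
    have e2 : (2 * a + 2) * (2 * a) ≤ d * (2 * a) := Nat.mul_le_mul_right _ hdge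
    have e3 : (2 * a + 2) * (2 * a) = 4 * a ^ 2 + 4 * a := by ring
    have hba : b + 1 ≤ a := by omega
    linarith
  have hsum := G.sum_degrees_eq_twice_card_edges
  rw [Finset.sum_congr rfl (fun v _ => hup v), Finset.sum_const, smul_eq_mul,
    Finset.card_univ, hN] at hsum
  have hodd : Odd ((4 * a ^ 2 + 2 * b + 2 * a + 1) * (2 * a + 1)) :=
    Odd.mul ⟨2 * a ^ 2 + b + a, by ring⟩ ⟨a, by ring⟩
  rw [hsum] at hodd
  exact (Nat.not_odd_iff_even.mpr (even_two_mul _)) hodd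
end
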